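/- arXiv:1912.06106 — 6 statements merged into one kernel-verified Lean document; each statement's English description precedes it below -/
import Mathlib

section
/- For every ν ∈ ℝ³ with |ν| = 1, the real 3×6 matrix (A'_ν | A''_ν), obtained by juxtaposing the columns of A'_ν and A''_ν, has rank 3. -/
open Matrix

noncomputable def alph (lam mu : ℝ) : ℝ :=
  (2 * Real.sqrt (2 * mu) + Real.sqrt (2 * mu + 3 * lam)) / 3

noncomputable def bet (lam mu : ℝ) : ℝ :=
  (- Real.sqrt (2 * mu) + Real.sqrt (2 * mu + 3 * lam)) / 3

/-- The matrix `A'_ν`. -/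
noncomputable def Ap (lam mu : ℝ) (ν : Fin 3 → ℝ) : Matrix (Fin 3) (Fin 3) ℝ :=
  - !![ν 0 * alph lam mu, ν 0 * bet lam mu, ν 0 * bet lam mu;
       ν 1 * bet lam mu, ν 1 * alph lam mu, ν 1 * bet lam mu;
       ν 2 * bet lam mu, ν 2 * bet lam mu, ν 2 * alph lam mu]

/-- The matrix `A''_ν`. -/
noncomputable def App (mu : ℝ) (ν : Fin 3 → ℝ) : Matrix (Fin 3) (Fin 3) ℝ :=
  (- Real.sqrt mu) • !![ν 1, ν 2, 0; ν 0, 0, ν 2; 0, ν 0, ν 1]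

lemma transpose3 (x00 x01 x02 x10 x11 x12 x20 x21 x22 : ℝ) :
    (!![x00, x01, x02; x10, x11, x12; x20, x21, x22])ᵀ =
      !![x00, x10, x20; x01, x11, x21; x02, x12, x22] := by
  ext i j; fin_cases i <;> fin_cases j <;> rfl

theorem stmt1 (lam mu : ℝ) (hmu : 0 < mu) (hlm : 0 < 2 * mu + 3 * lam) (ν : Fin 3 → ℝ)
    (hν : ν 0 ^ 2 + ν 1 ^ 2 + ν 2 ^ 2 = 1) :
    (Matrix.fromCols (Ap lam mu ν) (App mu ν)).rank = 3 := by
  rw [← Matrix.rank_self_mul_transpose, Matrix.transpose_fromCols,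
    Matrix.fromCols_mul_fromRows]
  have hM : Ap lam mu ν * (Ap lam mu ν)ᵀ + App mu ν * (App mu ν)ᵀ =
      !![mu + (lam + mu) * ν 0 ^ 2, (lam + mu) * (ν 0 * ν 1), (lam + mu) * (ν 0 * ν 2);
         (lam + mu) * (ν 0 * ν 1), mu + (lam + mu) * ν 1 ^ 2, (lam + mu) * (ν 1 * ν 2);
         (lam + mu) * (ν 0 * ν 2), (lam + mu) * (ν 1 * ν 2), mu + (lam + mu) * ν 2 ^ 2] := by
    have ha : Real.sqrt (2 * mu) ^ 2 = 2 * mu := Real.sq_sqrt (by linarith)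
    have hb : Real.sqrt (2 * mu + 3 * lam) ^ 2 = 2 * mu + 3 * lam := Real.sq_sqrt hlm.le
    have hc : Real.sqrt mu ^ 2 = mu := Real.sq_sqrt hmu.le
    unfold Ap App alph bet
    generalize Real.sqrt (2 * mu) = a at ha ⊢
    generalize Real.sqrt (2 * mu + 3 * lam) = b at hb ⊢
    generalize Real.sqrt mu = c at hc ⊢
    simp only [transpose_neg, transpose_smul, transpose3, neg_mul, mul_neg, neg_neg,
      smul_mul_assoc, mul_smul_comm, smul_smul, Matrix.mul_fin_three]
    ext i j
    fin_cases i <;> fin_cases j <;>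
      simp [Matrix.smul_apply] <;>
      ring_nf <;> simp only [ha, hb, hc] <;>
      (first | ring1 | linear_combination mu * hν)
  rw [hM]
  have hdet : (!![mu + (lam + mu) * ν 0 ^ 2, (lam + mu) * (ν 0 * ν 1), (lam + mu) * (ν 0 * ν 2);
         (lam + mu) * (ν 0 * ν 1), mu + (lam + mu) * ν 1 ^ 2, (lam + mu) * (ν 1 * ν 2);
         (lam + mu) * (ν 0 * ν 2), (lam + mu) * (ν 1 * ν 2),
         mu + (lam + mu) * ν 2 ^ 2] : Matrix (Fin 3) (Fin 3) ℝ).det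
         = mu ^ 2 * (2 * mu + lam) := by
    simp [Matrix.det_fin_three]
    linear_combination (mu ^ 2 * (lam + mu)) * hν
  have hpos : (0 : ℝ) < mu ^ 2 * (2 * mu + lam) 
    := mul_pos (by positivity) (by linarith)
  have hr := Matrix.rank_of_isUnit _ ((Matrix.isUnit_iff_isUnit_det
      (!![mu + (lam + mu) * ν 0 ^ 2, (lam + mu) * (ν 0 * ν 1), (lam + mu) * (ν 0 * ν 2);
         (lam + mu) * (ν 0 * ν 1), mu + (lam + mu) * ν 1 ^ 2, (lam + mu) * (ν 1 * ν 2);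
         (lam + mu) * (ν 0 * ν 2), (lam + mu) * (ν 1 * ν 2),
         mu + (lam + mu) * ν 2 ^ 2])).2
      (isUnit_iff_ne_zero.2 (by rw [hdet]; exact hpos.ne')))
  simpa using hr
end

section
/- For every ν ∈ ℝ³ with |ν| = 1, the symmetric real 9×9 matrix A_ν has rank 6, and the kernel of A_ν (the space of x ∈ ℝ⁹ with A_ν x = 0) has dimension 3. -/
open Matrix

/-- Index type for `9 = 3 + 3 + 3` block vectors/matrices. -/
abbrev I9 := Fin 3 ⊕ (Fin 3 ⊕ Fin 3)

/-- The symmetric `9 × 9` matrix `A_ν` in `3 × 3` block form. -/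
noncomputable def Anu (lam mu : ℝ) (ν : Fin 3 → ℝ) : Matrix I9 I9 ℝ :=
  Matrix.fromBlocks 0 (Matrix.fromCols (Ap lam mu ν) (App mu ν))
    (Matrix.fromRows (Ap lam mu ν)ᵀ (App mu ν)ᵀ) 0

lemma Bt_inj (lam mu : ℝ) (hmu : 0 < mu) (hlm : 0 < 2 * mu + 3 * lam) (ν : Fin 3 → ℝ)
    (hν : ν 0 ^ 2 + ν 1 ^ 2 + ν 2 ^ 2 = 1) (x : Fin 3 → ℝ)
    (h1 : (Ap lam mu ν)ᵀ *ᵥ x = 0) (h2 : (App mu ν)ᵀ *ᵥ x = 0) : x = 0 := by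
  have hsa : (0:ℝ) < Real.sqrt 2 * Real.sqrt mu := by positivity
  have hsb : (0:ℝ) < Real.sqrt (2 * mu + 3 * lam) := Real.sqrt_pos.2 hlm
  have hsm : (0:ℝ) < Real.sqrt mu := Real.sqrt_pos.2 hmu
  have e1 := congrFun h1 0
  have e2 := congrFun h1 1
  have e3 := congrFun h1 2
  have f1 := congrFun h2 0
  have f2 := congrFun h2 1
  have f3 := congrFun h2 2
  simp [Ap, App, alph, bet, Matrix.mulVec, dotProduct, Fin.sum_univ_three,
    Matrix.transpose_apply, Real.sqrt_mul' _ (le_of_lt (by norm_num : (0:ℝ) < 2))] at e1 e2 e3 f1 f2 f3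
  set sa := Real.sqrt 2 * Real.sqrt mu with hsadef
  set sb := Real.sqrt (2 * mu + 3 * lam) with hsbdef
  have d01 : sa * (ν 0 * x 0 - ν 1 * x 1) = 0 := by linear_combination e2 - e1
  have d02 : sa * (ν 0 * x 0 - ν 2 * x 2) = 0 := by linear_combination e3 - e1
  have dsum : sb * (ν 0 * x 0 + ν 1 * x 1 + ν 2 * x 2) = 0 := by
    linear_combination -e1 - e2 - e3
  have h01 : ν 0 * x 0 - ν 1 * x 1 = 0 := by
    rcases mul_eq_zero.1 d01 with h | h; · exact absurd h hsa.ne'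
    · exact h
  have h02 : ν 0 * x 0 - ν 2 * x 2 = 0 := by
    rcases mul_eq_zero.1 d02 with h | h; · exact absurd h hsa.ne'
    · exact h
  have hsum : ν 0 * x 0 + ν 1 * x 1 + ν 2 * x 2 = 0 := by
    rcases mul_eq_zero.1 dsum with h | h; · exact absurd h hsb.ne'
    · exact h
  have hy0 : ν 0 * x 0 = 0 := by linarith
  have hy1 : ν 1 * x 1 = 0 := by linarith
  have hy2 : ν 2 * x 2 = 0 := by linarith
  have g1' : Real.sqrt mu * (ν 1 * x 0 + ν 0 * x 1) = 0 := by linear_combination -f1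
  have g2' : Real.sqrt mu * (ν 2 * x 0 + ν 0 * x 2) = 0 := by linear_combination -f2
  have g3' : Real.sqrt mu * (ν 2 * x 1 + ν 1 * x 2) = 0 := by linear_combination -f3
  have g1 : ν 1 * x 0 + ν 0 * x 1 = 0 := by
    rcases mul_eq_zero.1 g1' with h | h; · exact absurd h hsm.ne'
    · exact h
  have g2 : ν 2 * x 0 + ν 0 * x 2 = 0 := by
    rcases mul_eq_zero.1 g2' with h | h; · exact absurd h hsm.ne'
    · exact h
  have g3 : ν 2 * x 1 + ν 1 * x 2 = 0 := by
    rcases mul_eq_zero.1 g3' with h | h; · exact absurd h hsm.ne'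
    · exact h
  funext i
  fin_cases i
  · show x 0 = 0
    linear_combination (-(x 0)) * hν + ν 0 * hy0 + ν 1 * g1 - ν 0 * hy1 + ν 2 * g2 - ν 0 * hy2
  · show x 1 = 0
    linear_combination (-(x 1)) * hν + ν 1 * hy1 + ν 0 * g1 - ν 1 * hy0 + ν 2 * g3 - ν 1 * hy2
  · show x 2 = 0
    linear_combination (-(x 2)) * hν + ν 2 * hy2 + ν 0 * g2 - ν 2 * hy0 + ν 1 * g3 - ν 2 * hy1
theorem stmt2 (lam mu : ℝ) (hmu : 0 < mu) (hlm : 0 < 2 * mu + 3 * lam) (ν : Fin 3 → ℝ)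
    (hν : ν 0 ^ 2 + ν 1 ^ 2 + ν 2 ^ 2 = 1) :
    (Anu lam mu ν).rank = 6 ∧
      Module.finrank ℝ (LinearMap.ker (Anu lam mu ν).mulVecLin) = 3 := by
  set B := Matrix.fromCols (Ap lam mu ν) (App mu ν) with hB
  have hAnu : Anu lam mu ν = Matrix.fromBlocks 0 B Bᵀ 0 := by
    rw [Anu, hB, transpose_fromCols]
  have hker : ∀ x : Fin 3 → ℝ, Bᵀ *ᵥ x = 0 → x = 0 := by
    intro x hx
    rw [hB, transpose_fromCols, fromRows_mulVec] at hx
    refine Bt_inj lam mu hmu hlm ν hν x ?_ ?_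
    · funext i; simpa using congrFun hx (Sum.inl i)
    · funext i; simpa using congrFun hx (Sum.inr i)
  have hinj : Function.Injective (Bᵀ).mulVecLin := by
    rw [← LinearMap.ker_eq_bot, LinearMap.ker_eq_bot']
    intro x hx
    exact hker x (by rw [Matrix.mulVecLin_apply] at hx; exact hx)
  have hrt : (Bᵀ).rank = 3 := by
    rw [Matrix.rank, LinearMap.finrank_range_of_inj hinj]
    simp
  have hrB : B.rank = 3 := by rw [← Matrix.rank_transpose]; exact hrt
  have hkB : Module.finrank ℝ (LinearMap.ker B.mulVecLin) = 3 := by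
    have h := LinearMap.finrank_range_add_finrank_ker B.mulVecLin
    rw [← Matrix.rank, hrB] at h
    have h6 : Module.finrank ℝ ((Fin 3 ⊕ Fin 3) → ℝ) = 6 := by simp
    omega
  have key : ∀ z : I9 → ℝ, (Anu lam mu ν) *ᵥ z = 0 ↔
      (z ∘ Sum.inl = 0 ∧ B *ᵥ (z ∘ Sum.inr) = 0) := by
    intro z
    rw [hAnu, fromBlocks_mulVec]
    constructor
    · intro h
      have hb : B *ᵥ (z ∘ Sum.inr) = 0 := by
        funext i; simpa using congrFun h (Sum.inl i)
      have ha : Bᵀ *ᵥ (z ∘ Sum.inl) = 0 := by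
        funext i; simpa using congrFun h (Sum.inr i)
      exact ⟨hker _ ha, hb⟩
    · rintro ⟨ha, hb⟩
      funext i
      cases i with
      | inl i => simpa using congrFun hb i
      | inr i => simp [ha]
  -- linear equivalence between the two kernels
  have hmem : ∀ z : LinearMap.ker (Anu lam mu ν).mulVecLin,
      (LinearMap.funLeft ℝ ℝ Sum.inr) ((z : I9 → ℝ)) ∈ LinearMap.ker B.mulVecLin := by
    intro z
    have hz := z.2
    rw [LinearMap.mem_ker, Matrix.mulVecLin_apply] at hz ⊢
    exact ((key _).1 hz).2
  let φ : LinearMap.ker (Anu lam mu ν).mulVecLin →ₗ[ℝ] LinearMap.ker B.mulVecLin :=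
    LinearMap.codRestrict _ ((LinearMap.funLeft ℝ ℝ Sum.inr).comp
      (LinearMap.ker (Anu lam mu ν).mulVecLin).subtype) hmem
  have hbij : Function.Bijective φ := by
    constructor
    · intro z w hzw
      have h1 : (z : I9 → ℝ) ∘ Sum.inr = (w : I9 → ℝ) ∘ Sum.inr := by
        have := congrArg Subtype.val hzw
        exact this
      have hz := (key _).1 (by have h := z.2; rwa [LinearMap.mem_ker, Matrix.mulVecLin_apply] at h)
      have hw := (key _).1 (by have h := w.2; rwa [LinearMap.mem_ker, Matrix.mulVecLin_apply] at h)
      apply Subtype.ext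
      funext i
      cases i with
      | inl i =>
        have := congrFun hz.1 i
        have := congrFun hw.1 i
        simp_all
      | inr i => exact congrFun h1 i
    · intro y
      have hy : B *ᵥ (y : (Fin 3 ⊕ Fin 3) → ℝ) = 0 := by have h := y.2; rwa [LinearMap.mem_ker, Matrix.mulVecLin_apply] at h
      refine ⟨⟨Sum.elim 0 (y : (Fin 3 ⊕ Fin 3) → ℝ), ?_⟩, ?_⟩
      · rw [LinearMap.mem_ker, Matrix.mulVecLin_apply, key]
        constructor
        · funext i; simp
        · simpa using hy
      · apply Subtype.ext
        funext i
        simp [φ, LinearMap.funLeft]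
  have heq : Module.finrank ℝ (LinearMap.ker (Anu lam mu ν).mulVecLin) = 3 := by
    rw [(LinearEquiv.ofBijective φ hbij).finrank_eq]
    exact hkB
  refine ⟨?_, heq⟩
  have h := LinearMap.finrank_range_add_finrank_ker (Anu lam mu ν).mulVecLin
  rw [← Matrix.rank, heq] at h
  have h9 : Module.finrank ℝ (I9 → ℝ) = 9 := by simp
  omega
end

section
/- Let A' and A'' be real 3×3 matrices with A' invertible, let A be the real 9×9 matrix given in 3×3-block form by A := [[0, A', A''], [A'ᵀ, 0, 0], [A''ᵀ, 0, 0]], and let M be a symmetric real 9×9 matrix such that Ker A ⊆ Ker M. Then the 3×3 blocks of M satisfy M₂' = M₂ (A')⁻¹ A'', M₃' = M₃ (A')⁻¹ A'', and M₃'' = (M₃')ᵀ (A')⁻¹ A''. -/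
open Matrix

/-- The `9 × 9` matrix `A` in `3 × 3` block form `[[0, A', A''], [A'ᵀ, 0, 0], [A''ᵀ, 0, 0]]`. -/
def blockA (A' A'' : Matrix (Fin 3) (Fin 3) ℝ) : Matrix I9 I9 ℝ :=
  Matrix.fromBlocks 0 (Matrix.fromCols A' A'') (Matrix.fromRows A'ᵀ A''ᵀ) 0

/-- The block `M₁ = M[1..3,1..3]` of a `9 × 9` matrix. -/
def blk₁ (M : Matrix I9 I9 ℝ) : Matrix (Fin 3) (Fin 3) ℝ := M.submatrix Sum.inl Sum.inl

/-- The block `M₂ = M[1..3,4..6]`. -/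
def blk₂ (M : Matrix I9 I9 ℝ) : Matrix (Fin 3) (Fin 3) ℝ :=
  M.submatrix Sum.inl (Sum.inr ∘ Sum.inl)

/-- The block `M₂' = M[1..3,7..9]`. -/
def blk₂' (M : Matrix I9 I9 ℝ) : Matrix (Fin 3) (Fin 3) ℝ :=
  M.submatrix Sum.inl (Sum.inr ∘ Sum.inr)

/-- The block `M₃ = M[4..6,4..6]`. -/
def blk₃ (M : Matrix I9 I9 ℝ) : Matrix (Fin 3) (Fin 3) ℝ :=
  M.submatrix (Sum.inr ∘ Sum.inl) (Sum.inr ∘ Sum.inl)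

/-- The block `M₃' = M[4..6,7..9]`. -/
def blk₃' (M : Matrix I9 I9 ℝ) : Matrix (Fin 3) (Fin 3) ℝ :=
  M.submatrix (Sum.inr ∘ Sum.inl) (Sum.inr ∘ Sum.inr)

/-- The block `M₃'' = M[7..9,7..9]`. -/
def blk₃'' (M : Matrix I9 I9 ℝ) : Matrix (Fin 3) (Fin 3) ℝ :=
  M.submatrix (Sum.inr ∘ Sum.inr) (Sum.inr ∘ Sum.inr)

theorem stmt6 (A' A'' : Matrix (Fin 3) (Fin 3) ℝ) (hA' : IsUnit A'.det)
    (M : Matrix I9 I9 ℝ) (hM : M.IsSymm)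
    (hker : ∀ x : I9 → ℝ, (blockA A' A'').mulVec x = 0 → M.mulVec x = 0) :
    blk₂' M = blk₂ M * A'⁻¹ * A'' ∧ blk₃' M = blk₃ M * A'⁻¹ * A'' ∧
      blk₃'' M = (blk₃' M)ᵀ * A'⁻¹ * A'' := by
  have hA1 : A' * A'⁻¹ = 1 := Matrix.mul_nonsing_inv A' hA'
  set N : Matrix (Fin 3) (Fin 3) ℝ := A'⁻¹ * A'' with hN
  have key : ∀ w : Fin 3 → ℝ,
      M.mulVec (Sum.elim 0 (Sum.elim (-(N.mulVec w)) w)) = 0 := by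
    intro w
    apply hker
    show (blockA A' A'').mulVec _ = 0
    unfold blockA
    rw [Matrix.fromBlocks_mulVec]
    simp only [Sum.elim_comp_inl, Sum.elim_comp_inr]
    rw [Matrix.fromCols_mulVec_sumElim]
    simp [Matrix.mulVec_neg, Matrix.mulVec_mulVec, ← Matrix.mul_assoc, hA1, hN]
  have key2 : ∀ (j : Fin 3) (i : I9),
      (∑ k : Fin 3, M i (Sum.inr (Sum.inl k)) * N k j) = M i (Sum.inr (Sum.inr j)) := by
    intro j i
    have := congrFun (key (Pi.single j 1)) i
    simp [Matrix.mulVec, dotProduct, Fintype.sum_sum_type, Pi.single_apply,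
      mul_ite, Finset.sum_ite_eq'] at this
    linarith [this]
  refine ⟨?_, ?_, ?_⟩
  · ext i j
    rw [Matrix.mul_assoc, ← hN]
    simp only [blk₂', blk₂, Matrix.mul_apply, Matrix.submatrix_apply, Function.comp_apply]
    exact (key2 j (Sum.inl i)).symm
  · ext i j
    rw [Matrix.mul_assoc, ← hN]
    simp only [blk₃', blk₃, Matrix.mul_apply, Matrix.submatrix_apply, Function.comp_apply]
    exact (key2 j (Sum.inr (Sum.inl i))).symm
  · ext i j
    rw [Matrix.mul_assoc, ← hN]
    simp only [blk₃'', blk₃', Matrix.mul_apply, Matrix.submatrix_apply,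
      Matrix.transpose_apply, Function.comp_apply]
    have := key2 j (Sum.inr (Sum.inr i))
    rw [← this]
    refine Finset.sum_congr rfl fun k _ => ?_
    rw [← hM.apply (Sum.inr (Sum.inr i)) (Sum.inr (Sum.inl k))]
end

section
/- Let ν ∈ ℝ³ with |ν| = 1 and ν_i ≠ 0 for i = 1, 2, 3, and let M be an admissible boundary matrix for A_ν. Then the blocks M₁ and M₃ of M are positive definite, and rank(A_ν + M) = rank(A_ν − M) = 3. -/
open Matrix

/-- `M` is an admissible boundary matrix for `A`: `M` is symmetric positive semidefinite,
`Ker A ⊆ Ker M`, and `Ker (A - M) + Ker (A + M) = ℝ⁹`. -/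
def IsAdmissible (A M : Matrix I9 I9 ℝ) : Prop :=
  M.IsSymm ∧ M.PosSemidef ∧ (∀ x : I9 → ℝ, A.mulVec x = 0 → M.mulVec x = 0) ∧
    LinearMap.ker (A - M).mulVecLin ⊔ LinearMap.ker (A + M).mulVecLin = ⊤

lemma det_Ap (lam mu : ℝ) (ν : Fin 3 → ℝ) :
    (Ap lam mu ν).det = -(ν 0 * ν 1 * ν 2) * Real.sqrt (2*mu) ^ 2 * Real.sqrt (2*mu+3*lam) := by
  simp [Ap, Matrix.det_fin_three, alph, bet]
  ring

lemma det_Ap_ne (lam mu : ℝ) (hmu : 0 < mu) (hlm : 0 < 2 * mu + 3 * lam) (ν : Fin 3 → ℝ)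
    (hν0 : ∀ i : Fin 3, ν i ≠ 0) : (Ap lam mu ν).det ≠ 0 := by
  rw [det_Ap]
  have h1 : Real.sqrt (2*mu) ≠ 0 := ne_of_gt (Real.sqrt_pos.mpr (by linarith))
  have h2 : Real.sqrt (2*mu+3*lam) ≠ 0 := ne_of_gt (Real.sqrt_pos.mpr (by linarith))
  exact mul_ne_zero (mul_ne_zero (neg_ne_zero.mpr
    (mul_ne_zero (mul_ne_zero (hν0 0) (hν0 1)) (hν0 2))) (pow_ne_zero _ h1)) h2

lemma mulVec_eq_zero3 {N : Matrix (Fin 3) (Fin 3) ℝ} (hN : N.det ≠ 0) {v : Fin 3 → ℝ}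
    (h : N *ᵥ v = 0) : v = 0 := by
  have := congrArg (fun w => N⁻¹ *ᵥ w) h
  simpa [Matrix.mulVec_mulVec, Matrix.nonsing_inv_mul N (isUnit_iff_ne_zero.mpr hN)] using this

lemma Anu_isSymm (lam mu : ℝ) (ν : Fin 3 → ℝ) : (Anu lam mu ν).IsSymm := by
  unfold Matrix.IsSymm
  rw [Anu, fromBlocks_transpose, transpose_fromCols, transpose_fromRows]
  simp

lemma mulVec_Anu (lam mu : ℝ) (ν : Fin 3 → ℝ) (x : I9 → ℝ) :
    (Anu lam mu ν) *ᵥ x = Sum.elim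
      (Ap lam mu ν *ᵥ (x ∘ Sum.inr ∘ Sum.inl) + App mu ν *ᵥ (x ∘ Sum.inr ∘ Sum.inr))
      (Sum.elim ((Ap lam mu ν)ᵀ *ᵥ (x ∘ Sum.inl)) ((App mu ν)ᵀ *ᵥ (x ∘ Sum.inl))) := by
  rw [Anu, fromBlocks_mulVec]
  have hx : x ∘ Sum.inr = Sum.elim (x ∘ Sum.inr ∘ Sum.inl) (x ∘ Sum.inr ∘ Sum.inr) :=
    (Sum.elim_comp_inl_inr _).symm
  rw [hx, fromCols_mulVec_sumElim, fromRows_mulVec]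
  simp [Function.comp_assoc]

lemma kerA_inl (lam mu : ℝ) (hmu : 0 < mu) (hlm : 0 < 2 * mu + 3 * lam) (ν : Fin 3 → ℝ)
    (hν0 : ∀ i : Fin 3, ν i ≠ 0) (x : I9 → ℝ) (hx : Anu lam mu ν *ᵥ x = 0) :
    x ∘ Sum.inl = 0 := by
  have h1 : (Ap lam mu ν)ᵀ *ᵥ (x ∘ Sum.inl) = 0 := by
    funext i
    have := congrFun hx (Sum.inr (Sum.inl i))
    rwa [mulVec_Anu] at this
  exact mulVec_eq_zero3 (by rw [Matrix.det_transpose]; exact det_Ap_ne lam mu hmu hlm ν hν0) h1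

noncomputable def Tker (lam mu : ℝ) (ν : Fin 3 → ℝ) : (Fin 3 → ℝ) →ₗ[ℝ] (I9 → ℝ) :=
  (Matrix.fromRows (0 : Matrix (Fin 3) (Fin 3) ℝ)
    (Matrix.fromRows (-((Ap lam mu ν)⁻¹ * App mu ν)) (1 : Matrix (Fin 3) (Fin 3) ℝ))).mulVecLin

lemma Tker_apply (lam mu : ℝ) (ν : Fin 3 → ℝ) (w : Fin 3 → ℝ) :
    Tker lam mu ν w = Sum.elim (0 : Fin 3 → ℝ)
      (Sum.elim (-(((Ap lam mu ν)⁻¹ * App mu ν) *ᵥ w)) w) := by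
  simp [Tker, Matrix.neg_mulVec]

lemma range_Tker (lam mu : ℝ) (hmu : 0 < mu) (hlm : 0 < 2 * mu + 3 * lam) (ν : Fin 3 → ℝ)
    (hν0 : ∀ i : Fin 3, ν i ≠ 0) :
    LinearMap.range (Tker lam mu ν) = LinearMap.ker (Anu lam mu ν).mulVecLin := by
  have hdet := det_Ap_ne lam mu hmu hlm ν hν0
  have hunit : IsUnit (Ap lam mu ν).det := isUnit_iff_ne_zero.mpr hdet
  apply le_antisymm
  · rintro _ ⟨w, rfl⟩
    rw [LinearMap.mem_ker, mulVecLin_apply, Tker_apply, mulVec_Anu]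
    have h1 : (Sum.elim (0 : Fin 3 → ℝ)
        (Sum.elim (-(((Ap lam mu ν)⁻¹ * App mu ν) *ᵥ w)) w)) ∘ Sum.inl = 0 := rfl
    have h2 : (Sum.elim (0 : Fin 3 → ℝ)
        (Sum.elim (-(((Ap lam mu ν)⁻¹ * App mu ν) *ᵥ w)) w)) ∘ Sum.inr ∘ Sum.inl
        = -(((Ap lam mu ν)⁻¹ * App mu ν) *ᵥ w) := rfl
    have h3 : (Sum.elim (0 : Fin 3 → ℝ)
        (Sum.elim (-(((Ap lam mu ν)⁻¹ * App mu ν) *ᵥ w)) w)) ∘ Sum.inr ∘ Sum.inr = w := rfl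
    rw [h1, h2, h3]
    have h4 : Ap lam mu ν *ᵥ (-(((Ap lam mu ν)⁻¹ * App mu ν) *ᵥ w)) = -(App mu ν *ᵥ w) := by
      rw [Matrix.mulVec_neg, Matrix.mulVec_mulVec, ← Matrix.mul_assoc,
        Matrix.mul_nonsing_inv _ hunit, Matrix.one_mul]
    rw [h4]
    funext i
    cases i <;> simp
  · intro x hx
    rw [LinearMap.mem_ker, mulVecLin_apply] at hx
    have hl : x ∘ Sum.inl = 0 := kerA_inl lam mu hmu hlm ν hν0 x hx
    have h1 : Ap lam mu ν *ᵥ (x ∘ Sum.inr ∘ Sum.inl) + App mu ν *ᵥ (x ∘ Sum.inr ∘ Sum.inr) = 0 := by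
      funext i
      have := congrFun hx (Sum.inl i)
      rwa [mulVec_Anu] at this
    refine ⟨x ∘ Sum.inr ∘ Sum.inr, ?_⟩
    rw [Tker_apply]
    have h2 : Ap lam mu ν *ᵥ (x ∘ Sum.inr ∘ Sum.inl) = -(App mu ν *ᵥ (x ∘ Sum.inr ∘ Sum.inr)) := by
      rw [add_eq_zero_iff_eq_neg] at h1
      exact h1
    have hz : x ∘ Sum.inr ∘ Sum.inl
        = -(((Ap lam mu ν)⁻¹ * App mu ν) *ᵥ (x ∘ Sum.inr ∘ Sum.inr)) := by
      have h3 := congrArg (fun v => (Ap lam mu ν)⁻¹ *ᵥ v) h2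
      simpa [Matrix.mulVec_mulVec, Matrix.nonsing_inv_mul _ hunit, Matrix.mulVec_neg,
        Matrix.mul_assoc] using h3
    funext i
    rcases i with i | i | i
    · exact (congrFun hl i).symm
    · exact (congrFun hz i).symm
    · rfl

lemma finrank_kerA (lam mu : ℝ) (hmu : 0 < mu) (hlm : 0 < 2 * mu + 3 * lam) (ν : Fin 3 → ℝ)
    (hν0 : ∀ i : Fin 3, ν i ≠ 0) :
    Module.finrank ℝ (LinearMap.ker (Anu lam mu ν).mulVecLin) = 3 := by
  rw [← range_Tker lam mu hmu hlm ν hν0]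
  have hinj : Function.Injective (Tker lam mu ν) := by
    intro a b hab
    funext i
    have h3 : ∀ w : Fin 3 → ℝ, (Tker lam mu ν w) (Sum.inr (Sum.inr i)) = w i := by
      intro w; rw [Tker_apply]; rfl
    rw [← h3 a, ← h3 b, hab]
  rw [LinearMap.finrank_range_of_inj hinj]
  simp

lemma dot_symm (N : Matrix I9 I9 ℝ) (h : N.IsSymm) (u x : I9 → ℝ) :
    u ⬝ᵥ (N *ᵥ x) = (N *ᵥ u) ⬝ᵥ x := by
  rw [Matrix.dotProduct_mulVec, ← Matrix.mulVec_transpose, h]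

lemma quad_zero (lam mu : ℝ) (ν : Fin 3 → ℝ) (x : I9 → ℝ) (hl : x ∘ Sum.inl = 0) :
    x ⬝ᵥ (Anu lam mu ν *ᵥ x) = 0 := by
  rw [mulVec_Anu, hl]
  nth_rewrite 1 [← Sum.elim_comp_inl_inr x]
  rw [sumElim_dotProduct_sumElim, hl]
  simp

lemma dot_blk1 (N : Matrix I9 I9 ℝ) (x : Fin 3 → ℝ) :
    Sum.elim x 0 ⬝ᵥ (N *ᵥ Sum.elim x 0) = x ⬝ᵥ (blk₁ N *ᵥ x) := by
  simp [dotProduct, Matrix.mulVec, Fintype.sum_sum_type, blk₁]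

lemma dot_blk3 (N : Matrix I9 I9 ℝ) (x : Fin 3 → ℝ) :
    Sum.elim 0 (Sum.elim x 0) ⬝ᵥ (N *ᵥ Sum.elim 0 (Sum.elim x 0)) = x ⬝ᵥ (blk₃ N *ᵥ x) := by
  simp [dotProduct, Matrix.mulVec, Fintype.sum_sum_type, blk₃]

theorem stmt7 (lam mu : ℝ) (hmu : 0 < mu) (hlm : 0 < 2 * mu + 3 * lam) (ν : Fin 3 → ℝ)
    (hν : ν 0 ^ 2 + ν 1 ^ 2 + ν 2 ^ 2 = 1)
    (hν0 : ∀ i : Fin 3, ν i ≠ 0)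
    (M : Matrix I9 I9 ℝ) (hM : IsAdmissible (Anu lam mu ν) M) :
    (blk₁ M).PosDef ∧ (blk₃ M).PosDef ∧
      (Anu lam mu ν + M).rank = 3 ∧ (Anu lam mu ν - M).rank = 3 := by
  obtain ⟨hMsym, hMpsd, hker, hsum⟩ := hM
  have hAsymm := Anu_isSymm lam mu ν
  have hdet := det_Ap_ne lam mu hmu hlm ν hν0
  set A := Anu lam mu ν with hAdef
  have hdotA : ∀ u x : I9 → ℝ, u ⬝ᵥ (A *ᵥ x) = (A *ᵥ u) ⬝ᵥ x := dot_symm A hAsymm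
  have hdotM : ∀ u x : I9 → ℝ, u ⬝ᵥ (M *ᵥ x) = (M *ᵥ u) ⬝ᵥ x := dot_symm M hMsym
  -- ker M ⊆ ker A
  have hMA : ∀ x : I9 → ℝ, M *ᵥ x = 0 → A *ᵥ x = 0 := by
    intro x hx
    have hxmem : x ∈ LinearMap.ker (A - M).mulVecLin ⊔ LinearMap.ker (A + M).mulVecLin := by
      rw [hsum]; exact Submodule.mem_top
    obtain ⟨u, hu, w, hw, hx'⟩ := Submodule.mem_sup.mp hxmem
    rw [LinearMap.mem_ker, Matrix.mulVecLin_apply, Matrix.sub_mulVec, sub_eq_zero] at hu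
    rw [LinearMap.mem_ker, Matrix.mulVecLin_apply, Matrix.add_mulVec,
      add_eq_zero_iff_eq_neg] at hw
    subst hx'
    have hMw : M *ᵥ w = -(M *ᵥ u) := by
      have h1 : M *ᵥ u + M *ᵥ w = 0 := by rw [← Matrix.mulVec_add]; exact hx
      linear_combination (norm := module) h1
    have hAx : A *ᵥ (u + w) = M *ᵥ u + M *ᵥ u := by
      rw [Matrix.mulVec_add, hu, hw, hMw, neg_neg]
    have h0 : u ⬝ᵥ (M *ᵥ u) = 0 := by
      have e1 : u ⬝ᵥ (A *ᵥ (u + w)) = (A *ᵥ u) ⬝ᵥ (u + w) := hdotA u (u + w)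
      have e2 : (A *ᵥ u) ⬝ᵥ (u + w) = 0 := by
        rw [hu, dotProduct_comm, hdotM, hx, zero_dotProduct]
      rw [hAx, dotProduct_add] at e1
      rw [e2] at e1
      linarith
    have hMu : M *ᵥ u = 0 := by
      have := (hMpsd.dotProduct_mulVec_zero_iff u).mp (by simpa using h0)
      exact this
    rw [hAx, hMu, add_zero]
  -- membership characterizations
  set U := LinearMap.ker (A - M).mulVecLin with hUdef
  set V := LinearMap.ker (A + M).mulVecLin with hVdef
  have hUmem : ∀ x : I9 → ℝ, x ∈ U ↔ A *ᵥ x = M *ᵥ x := by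
    intro x
    rw [hUdef, LinearMap.mem_ker, Matrix.mulVecLin_apply, Matrix.sub_mulVec, sub_eq_zero]
  have hVmem : ∀ x : I9 → ℝ, x ∈ V ↔ A *ᵥ x = -(M *ᵥ x) := by
    intro x
    rw [hVdef, LinearMap.mem_ker, Matrix.mulVecLin_apply, Matrix.add_mulVec,
      add_eq_zero_iff_eq_neg]
  have hKU : ∀ x : I9 → ℝ, A *ᵥ x = 0 → x ∈ U := by
    intro x h; rw [hUmem, h, hker x h]
  have hKV : ∀ x : I9 → ℝ, A *ᵥ x = 0 → x ∈ V := by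
    intro x h; rw [hVmem, h, hker x h, neg_zero]
  have hInf : U ⊓ V = LinearMap.ker A.mulVecLin := by
    ext x
    simp only [Submodule.mem_inf, hUmem, hVmem, LinearMap.mem_ker, Matrix.mulVecLin_apply]
    constructor
    · rintro ⟨h1, h2⟩
      have hm : M *ᵥ x = 0 := by
        have h3 := h1.symm.trans h2
        funext i
        have := congrFun h3 i
        simp only [Pi.neg_apply] at this
        have h4 : (M *ᵥ x) i = 0 := by linarith
        simpa using h4
      rw [h1, hm]
    · intro h
      exact ⟨h.trans (hker x h).symm, by rw [h, hker x h, neg_zero]⟩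
  -- dimension count
  have hk3 := finrank_kerA lam mu hmu hlm ν hν0
  have hsupinf := Submodule.finrank_sup_add_finrank_inf_eq U V
  rw [hsum, hInf, finrank_top] at hsupinf
  have hdim9 : Module.finrank ℝ (I9 → ℝ) = 9 := by
    simp [Module.finrank_fintype_fun_eq_card]
  rw [hdim9, hk3] at hsupinf
  -- bound
  have hbound : ∀ W : Submodule ℝ (I9 → ℝ),
      (∀ x ∈ W, x ∘ Sum.inl = 0 → A *ᵥ x = 0) → (∀ x : I9 → ℝ, A *ᵥ x = 0 → x ∈ W) →
      Module.finrank ℝ W ≤ 6 := by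
    intro W hW1 hW2
    set f : (I9 → ℝ) →ₗ[ℝ] (Fin 3 → ℝ) := LinearMap.funLeft ℝ ℝ Sum.inl with hfdef
    set g := f.comp W.subtype with hgdef
    have hrn := LinearMap.finrank_range_add_finrank_ker g
    have hker_g : LinearMap.ker g = Submodule.comap W.subtype (LinearMap.ker f) :=
      LinearMap.ker_comp _ _
    have hmap : Submodule.map W.subtype (LinearMap.ker g) = LinearMap.ker f ⊓ W := by
      rw [hker_g, Submodule.map_comap_subtype, inf_comm]
    have hfx : ∀ x : I9 → ℝ, f x = x ∘ Sum.inl := fun x => rfl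
    have hKerf : LinearMap.ker f ⊓ W = LinearMap.ker A.mulVecLin := by
      ext x
      simp only [Submodule.mem_inf, LinearMap.mem_ker, Matrix.mulVecLin_apply, hfx]
      constructor
      · rintro ⟨h1, h2⟩
        exact hW1 x h2 h1
      · intro h
        exact ⟨kerA_inl lam mu hmu hlm ν hν0 x h, hW2 x h⟩
    have e1 : Module.finrank ℝ (LinearMap.ker g) = 3 := by
      have h5 := Submodule.finrank_map_subtype_eq W (LinearMap.ker g)
      rw [hmap, hKerf] at h5
      rw [← h5, hk3]
    have e2 : Module.finrank ℝ (LinearMap.range g) ≤ 3 := by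
      have h6 := Submodule.finrank_le (LinearMap.range g)
      have h7 : Module.finrank ℝ (Fin 3 → ℝ) = 3 := by
        simp [Module.finrank_fintype_fun_eq_card]
      omega
    omega
  have hU6 : Module.finrank ℝ U ≤ 6 := by
    apply hbound U _ hKU
    intro x hx hl
    rw [hUmem] at hx
    have hq : x ⬝ᵥ (A *ᵥ x) = 0 := quad_zero lam mu ν x hl
    rw [hx] at hq
    have hMx : M *ᵥ x = 0 := (hMpsd.dotProduct_mulVec_zero_iff x).mp (by simpa using hq)
    rw [hx, hMx]
  have hV6 : Module.finrank ℝ V ≤ 6 := by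
    apply hbound V _ hKV
    intro x hx hl
    rw [hVmem] at hx
    have hq : x ⬝ᵥ (A *ᵥ x) = 0 := quad_zero lam mu ν x hl
    rw [hx] at hq
    have hMx : M *ᵥ x = 0 := by
      refine (hMpsd.dotProduct_mulVec_zero_iff x).mp ?_
      simp only [dotProduct_neg] at hq
      simpa using neg_eq_zero.mp hq
    rw [hx, hMx, neg_zero]
  have hU : Module.finrank ℝ U = 6 := by omega
  have hV : Module.finrank ℝ V = 6 := by omega
  -- ranks
  have hrankp : (A + M).rank = 3 := by
    have := LinearMap.finrank_range_add_finrank_ker (A + M).mulVecLin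
    rw [← hVdef, hV, hdim9] at this
    rw [Matrix.rank]
    omega
  have hrankm : (A - M).rank = 3 := by
    have := LinearMap.finrank_range_add_finrank_ker (A - M).mulVecLin
    rw [← hUdef, hU, hdim9] at this
    rw [Matrix.rank]
    omega
  -- positive definiteness
  refine ⟨posDef_iff_dotProduct_mulVec.mpr ⟨?_, ?_⟩, posDef_iff_dotProduct_mulVec.mpr ⟨?_, ?_⟩, hrankp, hrankm⟩
  · -- blk₁ Hermitian
    ext i j
    have := congrFun (congrFun hMsym (Sum.inl i)) (Sum.inl j)
    simpa [blk₁, Matrix.conjTranspose_apply, Matrix.IsSymm, Matrix.transpose_apply] using this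
  · -- blk₁ positivity
    intro x hx
    have hge := hMpsd.dotProduct_mulVec_nonneg (Sum.elim x 0)
    have hq := dot_blk1 M x
    rcases lt_or_eq_of_le hge with h | h
    · simpa [hq.symm] using h
    · exfalso
      have hMx : M *ᵥ Sum.elim x 0 = 0 :=
        (hMpsd.dotProduct_mulVec_zero_iff _).mp h.symm
      have hAx : A *ᵥ Sum.elim x 0 = 0 := hMA _ hMx
      have := kerA_inl lam mu hmu hlm ν hν0 _ hAx
      exact hx (by funext i; exact congrFun this i)
  · -- blk₃ Hermitian
    ext i j
    have := congrFun (congrFun hMsym (Sum.inr (Sum.inl i))) (Sum.inr (Sum.inl j))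
    simpa [blk₃, Matrix.conjTranspose_apply, Matrix.IsSymm, Matrix.transpose_apply] using this
  · -- blk₃ positivity
    intro x hx
    have hge := hMpsd.dotProduct_mulVec_nonneg (Sum.elim 0 (Sum.elim x 0))
    have hq := dot_blk3 M x
    rcases lt_or_eq_of_le hge with h | h
    · simpa [hq.symm] using h
    · exfalso
      have hMx : M *ᵥ Sum.elim 0 (Sum.elim x 0) = 0 :=
        (hMpsd.dotProduct_mulVec_zero_iff _).mp h.symm
      have hAx : A *ᵥ Sum.elim 0 (Sum.elim x 0) = 0 := hMA _ hMx
      have h1 : Ap lam mu ν *ᵥ x = 0 := by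
        funext i
        have := congrFun hAx (Sum.inl i)
        rw [hAdef, mulVec_Anu] at this
        have c1 : (Sum.elim (0 : Fin 3 → ℝ) (Sum.elim x (0 : Fin 3 → ℝ)) : I9 → ℝ) ∘ Sum.inr ∘ Sum.inl = x := rfl
        have c2 : (Sum.elim (0 : Fin 3 → ℝ) (Sum.elim x (0 : Fin 3 → ℝ)) : I9 → ℝ) ∘ Sum.inr ∘ Sum.inr = (0 : Fin 3 → ℝ) := rfl
        rw [c1, c2] at this
        simpa using this
      exact hx (mulVec_eq_zero3 hdet h1)
end

section
/- Let ν ∈ ℝ³ with |ν| = 1 and ν_i ≠ 0 for i = 1, 2, 3, and let M be a symmetric real 9×9 matrix. Then M is an admissible boundary matrix for A_ν if and only if all of the following hold: (a) M₁ and M₃ are positive definite; (b) (A'_ν)ᵀ M₁⁻¹ M₂ and A'_ν M₃⁻¹ (M₂)ᵀ are skew-symmetric; (c) M₃ = (A'_ν)ᵀ M₁⁻¹ A'_ν + (M₂)ᵀ M₁⁻¹ M₂ and M₁ = A'_ν M₃⁻¹ (A'_ν)ᵀ + M₂ M₃⁻¹ (M₂)ᵀ; (d) M₂' = M₂ (A'_ν)⁻¹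 A''_ν, M₃' = M₃ (A'_ν)⁻¹ A''_ν, and M₃'' = (A''_ν)ᵀ ((A'_ν)⁻¹)ᵀ M₃ (A'_ν)⁻¹ A''_ν; (e) rank(A_ν + M) = rank(A_ν − M) = 3. -/
open Matrix

namespace Stmt9Aux
open Matrix

abbrev J6 := Fin 3 ⊕ Fin 3

noncomputable def Km (lam mu : ℝ) (ν : Fin 3 → ℝ) : Matrix (Fin 3) (Fin 3) ℝ :=
  (Ap lam mu ν)⁻¹ * App mu ν

noncomputable def Pm (lam mu : ℝ) (ν : Fin 3 → ℝ) : Matrix J6 I9 ℝ :=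
  fromBlocks 1 0 0 (fromCols 1 (Km lam mu ν))

def Qm : Matrix I9 J6 ℝ := fromBlocks 1 0 0 (fromRows 1 0)

noncomputable def Bm (lam mu : ℝ) (ν : Fin 3 → ℝ) : Matrix J6 J6 ℝ :=
  fromBlocks 0 (Ap lam mu ν) (Ap lam mu ν)ᵀ 0

def Nm (M : Matrix I9 I9 ℝ) : Matrix J6 J6 ℝ :=
  fromBlocks (blk₁ M) (blk₂ M) (blk₂ M)ᵀ (blk₃ M)

lemma mulVec_ext {A B : Matrix (Fin 3) (Fin 3) ℝ} (h : ∀ v, A *ᵥ v = B *ᵥ v) : A = B := by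
  ext i j
  have := congrFun (h (Pi.single j 1)) i
  simpa [Matrix.mulVec_single] using this

lemma mulVec_cancel {C : Matrix (Fin 3) (Fin 3) ℝ} (hU : IsUnit C.det) {v : Fin 3 → ℝ}
    (h : C *ᵥ v = 0) : v = 0 := by
  have := congrArg (fun w => C⁻¹ *ᵥ w) h
  simpa [Matrix.mulVec_mulVec, Matrix.nonsing_inv_mul _ hU] using this

lemma isUnit_Ap (lam mu : ℝ) (hmu : 0 < mu) (hlm : 0 < 2*mu+3*lam) (ν : Fin 3 → ℝ)
    (hν0 : ∀ i, ν i ≠ 0) : IsUnit (Ap lam mu ν).det := by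
  have h1 : alph lam mu - bet lam mu = Real.sqrt (2*mu) := by unfold alph bet; ring
  have h2 : alph lam mu + 2 * bet lam mu = Real.sqrt (2*mu+3*lam) := by unfold alph bet; ring
  have hA : (Ap lam mu ν).det
      = - (ν 0 * ν 1 * ν 2 * ((alph lam mu - bet lam mu)^2 * (alph lam mu + 2 * bet lam mu))) := by
    simp [Ap, Matrix.det_fin_three]
    ring
  rw [hA, h1, h2, Real.sq_sqrt (by linarith : (0:ℝ) ≤ 2*mu)]
  have h3 : Real.sqrt (2*mu+3*lam) ≠ 0 := ne_of_gt (Real.sqrt_pos.mpr hlm)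
  exact isUnit_iff_ne_zero.mpr (neg_ne_zero.mpr (mul_ne_zero
    (mul_ne_zero (mul_ne_zero (hν0 0) (hν0 1)) (hν0 2))
    (mul_ne_zero (by linarith) h3)))

section
variable (lam mu : ℝ) (ν : Fin 3 → ℝ)

lemma PQ_one : Pm lam mu ν * Qm = 1 := by
  simp [Pm, Qm, fromBlocks_multiply, fromCols_mul_fromRows, ← fromBlocks_one]

lemma QtPt_one : Qmᵀ * (Pm lam mu ν)ᵀ = 1 := by
  rw [← transpose_mul, PQ_one, transpose_one]

lemma Ap_mul_Km (hU : IsUnit (Ap lam mu ν).det) :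
    Ap lam mu ν * Km lam mu ν = App mu ν :=
  Matrix.mul_nonsing_inv_cancel_left _ _ hU

lemma Anu_eq (hU : IsUnit (Ap lam mu ν).det) :
    Anu lam mu ν = (Pm lam mu ν)ᵀ * Bm lam mu ν * Pm lam mu ν := by
  rw [Matrix.mul_assoc]
  simp only [Pm, Bm, fromBlocks_transpose, transpose_fromCols, transpose_one, transpose_zero,
    fromBlocks_multiply, Matrix.mul_one, Matrix.one_mul, Matrix.zero_mul, Matrix.mul_zero,
    add_zero, zero_add, Matrix.mul_fromCols, Matrix.fromRows_mul]
  rw [Anu, Ap_mul_Km lam mu ν hU, ← transpose_mul, Ap_mul_Km lam mu ν hU]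

variable {M : Matrix I9 I9 ℝ}

lemma blk₁_symm (hM : M.IsSymm) : (blk₁ M)ᵀ = blk₁ M := by
  ext i j; exact hM.apply _ _

lemma blk₃_symm (hM : M.IsSymm) : (blk₃ M)ᵀ = blk₃ M := by
  ext i j; exact hM.apply _ _

lemma Nm_symm (hM : M.IsSymm) : (Nm M)ᵀ = Nm M := by
  rw [Nm, fromBlocks_transpose, blk₁_symm hM, blk₃_symm hM, transpose_transpose]

lemma Bm_symm : (Bm lam mu ν)ᵀ = Bm lam mu ν := by
  rw [Bm, fromBlocks_transpose, transpose_transpose, transpose_zero]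

lemma M_blocks (hM : M.IsSymm) :
    M = fromBlocks (blk₁ M) (fromCols (blk₂ M) (blk₂' M))
        (fromRows (blk₂ M)ᵀ (blk₂' M)ᵀ)
        (fromBlocks (blk₃ M) (blk₃' M) (blk₃' M)ᵀ (blk₃'' M)) := by
  ext i j
  rcases i with i | i | i <;> rcases j with j | j | j <;>
    simp [fromBlocks, blk₁, blk₂, blk₂', blk₃, blk₃', blk₃'', fromCols, fromRows,
      hM.apply] <;> rfl

lemma QMQ (hM : M.IsSymm) : Qmᵀ * M * Qm = Nm M := by
  conv_lhs => rw [M_blocks hM]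
  rw [Matrix.mul_assoc]
  simp only [Qm, Nm, fromBlocks_transpose, transpose_fromRows, transpose_one, transpose_zero,
    fromBlocks_multiply, fromCols_mul_fromRows, fromBlocks_mul_fromRows,
    fromCols_mul_fromBlocks,
    Matrix.mul_one, Matrix.one_mul, Matrix.zero_mul, Matrix.mul_zero, add_zero, zero_add]

lemma MPNP (hM : M.IsSymm)
    (hd1 : blk₂' M = blk₂ M * (Ap lam mu ν)⁻¹ * App mu ν)
    (hd2 : blk₃' M = blk₃ M * (Ap lam mu ν)⁻¹ * App mu ν)
    (hd3 : blk₃'' M = (App mu ν)ᵀ * ((Ap lam mu ν)⁻¹)ᵀ * blk₃ M * (Ap lam mu ν)⁻¹ * App mu ν) :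
    M = (Pm lam mu ν)ᵀ * Nm M * Pm lam mu ν := by
  conv_lhs => rw [M_blocks hM]
  rw [Matrix.mul_assoc]
  simp only [Pm, Nm, fromBlocks_transpose, transpose_fromCols, transpose_one, transpose_zero,
    fromBlocks_multiply, Matrix.mul_one, Matrix.one_mul, Matrix.zero_mul, Matrix.mul_zero,
    add_zero, zero_add, Matrix.mul_fromCols, Matrix.fromRows_mul,
    fromRows_mul_fromCols, fromCols_fromRows_eq_fromBlocks]
  simp only [Km, hd1, hd2, hd3, transpose_mul, Matrix.mul_assoc, blk₃_symm hM]

lemma rank_conj (X : Matrix J6 J6 ℝ) :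
    ((Pm lam mu ν)ᵀ * X * Pm lam mu ν).rank = X.rank := by
  apply le_antisymm
  · calc ((Pm lam mu ν)ᵀ * X * Pm lam mu ν).rank
        ≤ ((Pm lam mu ν)ᵀ * X).rank := Matrix.rank_mul_le_left _ _
      _ ≤ X.rank := Matrix.rank_mul_le_right _ _
  · have h : Qmᵀ * ((Pm lam mu ν)ᵀ * X * Pm lam mu ν) * Qm = X := by
      rw [← Matrix.mul_assoc Qmᵀ ((Pm lam mu ν)ᵀ * X) (Pm lam mu ν),
        ← Matrix.mul_assoc Qmᵀ (Pm lam mu ν)ᵀ X, QtPt_one, Matrix.one_mul,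
        Matrix.mul_assoc, PQ_one, Matrix.mul_one]
    calc X.rank = (Qmᵀ * ((Pm lam mu ν)ᵀ * X * Pm lam mu ν) * Qm).rank := by rw [h]
      _ ≤ (Qmᵀ * ((Pm lam mu ν)ᵀ * X * Pm lam mu ν)).rank := Matrix.rank_mul_le_left _ _
      _ ≤ ((Pm lam mu ν)ᵀ * X * Pm lam mu ν).rank := Matrix.rank_mul_le_right _ _

lemma rank_special (W X : Matrix (Fin 3) (Fin 3) ℝ) (hW : IsUnit W.det) (hWs : Wᵀ = W) :
    (fromBlocks W X Xᵀ (Xᵀ * W⁻¹ * X)).rank = 3 := by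
  have hWinvT : (W⁻¹)ᵀ = W⁻¹ := by rw [transpose_nonsing_inv, hWs]
  set R : Matrix (Fin 3) J6 ℝ := fromCols 1 (W⁻¹ * X) with hR
  have hfac : fromBlocks W X Xᵀ (Xᵀ * W⁻¹ * X) = Rᵀ * (W * R) := by
    rw [hR, Matrix.mul_fromCols, transpose_fromCols, fromRows_mul_fromCols]
    rw [Matrix.mul_one, Matrix.mul_nonsing_inv_cancel_left _ _ hW, transpose_one, Matrix.one_mul,
      Matrix.one_mul, transpose_mul, hWinvT]
    simp only [← Matrix.mul_assoc, Matrix.nonsing_inv_mul_cancel_right _ _ hW]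
  set G : Matrix (Fin 3) J6 ℝ := fromCols 1 0 with hG
  apply le_antisymm
  · calc (fromBlocks W X Xᵀ (Xᵀ * W⁻¹ * X)).rank = (Rᵀ * (W * R)).rank := by rw [hfac]
      _ ≤ (Rᵀ : Matrix J6 (Fin 3) ℝ).rank := Matrix.rank_mul_le_left _ _
      _ ≤ 3 := by simpa using Matrix.rank_le_card_width (Rᵀ)
  · have hGW : G * fromBlocks W X Xᵀ (Xᵀ * W⁻¹ * X) * Gᵀ = W := by
      rw [hG, transpose_fromCols, transpose_one, transpose_zero, fromCols_mul_fromBlocks,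
        Matrix.mul_assoc]
      simp [fromCols_mul_fromRows]
    have h3 : (3:ℕ) = W.rank := by
      rw [Matrix.rank_of_isUnit W ((Matrix.isUnit_iff_isUnit_det W).mpr hW)]; simp
    calc (3:ℕ) = W.rank := h3
      _ = (G * fromBlocks W X Xᵀ (Xᵀ * W⁻¹ * X) * Gᵀ).rank := by rw [hGW]
      _ = (G * (fromBlocks W X Xᵀ (Xᵀ * W⁻¹ * X) * Gᵀ)).rank := by rw [Matrix.mul_assoc]
      _ ≤ (fromBlocks W X Xᵀ (Xᵀ * W⁻¹ * X) * Gᵀ).rank := Matrix.rank_mul_le_right _ _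
      _ ≤ _ := Matrix.rank_mul_le_left _ _

lemma Bm_inj (hU : IsUnit (Ap lam mu ν).det) {y : J6 → ℝ} (h : Bm lam mu ν *ᵥ y = 0) : y = 0 := by
  rw [Bm, fromBlocks_mulVec] at h
  have h1 : Ap lam mu ν *ᵥ (y ∘ Sum.inr) = 0 := by
    funext i; simpa using congrFun h (Sum.inl i)
  have h2 : (Ap lam mu ν)ᵀ *ᵥ (y ∘ Sum.inl) = 0 := by
    funext i; simpa using congrFun h (Sum.inr i)
  have e1 := mulVec_cancel hU h1
  have e2 := mulVec_cancel (by rwa [Matrix.det_transpose]) h2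
  funext i
  rcases i with i | i
  · exact congrFun e2 i
  · exact congrFun e1 i

lemma sum_elim_zero_iff {f g : Fin 3 → ℝ} :
    Sum.elim f g = (0 : J6 → ℝ) ↔ f = 0 ∧ g = 0 := by
  constructor
  · intro h
    exact ⟨funext fun i => congrFun h (Sum.inl i), funext fun i => congrFun h (Sum.inr i)⟩
  · rintro ⟨rfl, rfl⟩
    funext i; rcases i with i | i <;> rfl

lemma fromBlocks_mulVec_zero_iff (W X Y Z : Matrix (Fin 3) (Fin 3) ℝ) (a b : Fin 3 → ℝ) :
    fromBlocks W X Y Z *ᵥ Sum.elim a b = 0 ↔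
      (W *ᵥ a + X *ᵥ b = 0 ∧ Y *ᵥ a + Z *ᵥ b = 0) := by
  rw [fromBlocks_mulVec]
  simp only [Sum.elim_comp_inl, Sum.elim_comp_inr]
  exact sum_elim_zero_iff

lemma two_smul_zero {α : Type*} [AddCommGroup α] [Module ℝ α] {x : α} (h : x + x = 0) : x = 0 := by
  have h2 : (2:ℝ) • x = 0 := by rw [two_smul]; exact h
  rcases smul_eq_zero.mp h2 with h | h
  · norm_num at h
  · exact h

lemma symm_dot {n : Type*} [Fintype n] (S : Matrix n n ℝ) (hS : Sᵀ = S) (u w : n → ℝ) :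
    u ⬝ᵥ (S *ᵥ w) = w ⬝ᵥ (S *ᵥ u) := by
  rw [Matrix.dotProduct_mulVec, ← vecMul_transpose, hS, dotProduct_comm]

lemma posdef_of_dec {B N : Matrix J6 J6 ℝ} (hBs : Bᵀ = B)
    (hBinj : ∀ y : J6 → ℝ, B *ᵥ y = 0 → y = 0)
    (hNs : Nᵀ = N) (hN : N.PosSemidef)
    (hdec : ∀ y : J6 → ℝ, ∃ y₁ y₂ : J6 → ℝ,
      (B - N) *ᵥ y₁ = 0 ∧ (B + N) *ᵥ y₂ = 0 ∧ y = y₁ + y₂) : N.PosDef := by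
  have hinj : ∀ y : J6 → ℝ, N *ᵥ y = 0 → y = 0 := by
    intro y hy
    obtain ⟨y₁, y₂, h₁, h₂, rfl⟩ := hdec y
    have e₁ : N *ᵥ y₁ = B *ᵥ y₁ := by
      have := h₁; rw [Matrix.sub_mulVec, sub_eq_zero] at this; exact this.symm
    have e₂ : N *ᵥ y₂ = -(B *ᵥ y₂) := by
      have := h₂; rw [Matrix.add_mulVec, add_comm, add_eq_zero_iff_eq_neg] at this
      exact this
    have hc : y₁ ⬝ᵥ (N *ᵥ y₂) = 0 := by
      have h1 : y₁ ⬝ᵥ (N *ᵥ y₂) = -(y₂ ⬝ᵥ (N *ᵥ y₁)) := by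
        rw [e₂, dotProduct_neg, symm_dot B hBs, ← e₁, symm_dot N hNs]
      have h2 : y₂ ⬝ᵥ (N *ᵥ y₁) = y₁ ⬝ᵥ (N *ᵥ y₂) := symm_dot N hNs y₂ y₁
      rw [h2] at h1
      have := two_smul_zero (x := y₁ ⬝ᵥ (N *ᵥ y₂)) (by rw [eq_neg_iff_add_eq_zero] at h1; linarith [h1])
      exact this
    have hy₁ : y₁ = 0 := by
      have d1 : y₁ ⬝ᵥ (N *ᵥ y₁) = 0 := by
        have : y₁ ⬝ᵥ (N *ᵥ (y₁ + y₂)) = 0 := by rw [hy, dotProduct_zero]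
        rw [Matrix.mulVec_add, dotProduct_add, hc, add_zero] at this
        exact this
      have hN1 : N *ᵥ y₁ = 0 := by
        have := (hN.dotProduct_mulVec_zero_iff y₁).mp (by simpa using d1)
        exact this
      exact hBinj y₁ (by rw [← e₁]; exact hN1)
    have hy₂ : y₂ = 0 := by
      have hc2 : y₂ ⬝ᵥ (N *ᵥ y₁) = 0 := by rw [symm_dot N hNs]; exact hc
      have d2 : y₂ ⬝ᵥ (N *ᵥ y₂) = 0 := by
        have : y₂ ⬝ᵥ (N *ᵥ (y₁ + y₂)) = 0 := by rw [hy, dotProduct_zero]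
        rw [Matrix.mulVec_add, dotProduct_add, hc2, zero_add] at this
        exact this
      have hN2 : N *ᵥ y₂ = 0 := (hN.dotProduct_mulVec_zero_iff y₂).mp (by simpa using d2)
      apply hBinj
      have : -(B *ᵥ y₂) = 0 := by rw [← e₂]; exact hN2
      simpa using this
    rw [hy₁, hy₂, add_zero]
  refine PosDef.of_dotProduct_mulVec_pos hN.1 fun x hx => ?_
  rcases lt_or_eq_of_le (hN.dotProduct_mulVec_nonneg x) with h | h
  · exact h
  · exact absurd (hinj x ((hN.dotProduct_mulVec_zero_iff x).mp h.symm)) hx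

lemma posdef_blocks {M₁ M₂ M₃ : Matrix (Fin 3) (Fin 3) ℝ}
    (hN : (fromBlocks M₁ M₂ M₂ᵀ M₃ : Matrix J6 J6 ℝ).PosDef) : M₁.PosDef ∧ M₃.PosDef := by
  constructor
  · refine PosDef.of_dotProduct_mulVec_pos ?_ fun x hx => ?_
    · ext i j
      simpa using hN.1.apply (Sum.inl i) (Sum.inl j)
    · have hne : (Sum.elim x 0 : J6 → ℝ) ≠ 0 := by
        intro h; exact hx (funext fun i => congrFun h (Sum.inl i))
      have := hN.dotProduct_mulVec_pos hne
      simpa [fromBlocks_mulVec, Sum.elim_comp_inl, Sum.elim_comp_inr,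
        sumElim_dotProduct_sumElim] using this
  · refine PosDef.of_dotProduct_mulVec_pos ?_ fun x hx => ?_
    · ext i j
      simpa using hN.1.apply (Sum.inr i) (Sum.inr j)
    · have hne : (Sum.elim 0 x : J6 → ℝ) ≠ 0 := by
        intro h; exact hx (funext fun i => congrFun h (Sum.inr i))
      have := hN.dotProduct_mulVec_pos hne
      simpa [fromBlocks_mulVec, Sum.elim_comp_inl, Sum.elim_comp_inr,
        sumElim_dotProduct_sumElim] using this

lemma expand_plus (C M₂ W : Matrix (Fin 3) (Fin 3) ℝ) :
    (Cᵀ + M₂ᵀ) * W * (C + M₂)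
      = Cᵀ*W*C + M₂ᵀ*W*M₂ + (Cᵀ*W*M₂ + M₂ᵀ*W*C) := by noncomm_ring

lemma expand_minus (C M₂ W : Matrix (Fin 3) (Fin 3) ℝ) :
    (Cᵀ - M₂ᵀ) * W * (C - M₂)
      = Cᵀ*W*C + M₂ᵀ*W*M₂ - (Cᵀ*W*M₂ + M₂ᵀ*W*C) := by noncomm_ring

lemma schur_combine {C M₂ W M₃ : Matrix (Fin 3) (Fin 3) ℝ}
    (hSp : M₃ = (Cᵀ + M₂ᵀ) * W * (C + M₂)) (hSm : M₃ = (Cᵀ - M₂ᵀ) * W * (C - M₂)) :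
    Cᵀ*W*M₂ + M₂ᵀ*W*C = 0 ∧ M₃ = Cᵀ*W*C + M₂ᵀ*W*M₂ := by
  have h := hSp.symm.trans hSm
  rw [expand_plus, expand_minus] at h
  have h0 : Cᵀ*W*M₂ + M₂ᵀ*W*C = 0 := by
    apply two_smul_zero
    have := sub_eq_zero.mpr h
    rw [show (Cᵀ*W*C + M₂ᵀ*W*M₂ + (Cᵀ*W*M₂ + M₂ᵀ*W*C)) - (Cᵀ*W*C + M₂ᵀ*W*M₂ - (Cᵀ*W*M₂ + M₂ᵀ*W*C))
      = (Cᵀ*W*M₂ + M₂ᵀ*W*C) + (Cᵀ*W*M₂ + M₂ᵀ*W*C) from by abel] at this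
    exact this
  exact ⟨h0, by rw [hSp, expand_plus, h0, add_zero]⟩

lemma schur_of {C M₂ W M₃ : Matrix (Fin 3) (Fin 3) ℝ}
    (h0 : Cᵀ*W*M₂ + M₂ᵀ*W*C = 0) (he : M₃ = Cᵀ*W*C + M₂ᵀ*W*M₂) :
    M₃ = (Cᵀ + M₂ᵀ) * W * (C + M₂) ∧ M₃ = (Cᵀ - M₂ᵀ) * W * (C - M₂) := by
  constructor
  · rw [expand_plus, h0, add_zero]; exact he
  · rw [expand_minus, h0, sub_zero]; exact he

lemma skew_iff {C W M₂ : Matrix (Fin 3) (Fin 3) ℝ} (hWt : Wᵀ = W) :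
    (Cᵀ*W*M₂)ᵀ = -(Cᵀ*W*M₂) ↔ Cᵀ*W*M₂ + M₂ᵀ*W*C = 0 := by
  have ht : (Cᵀ*W*M₂)ᵀ = M₂ᵀ*W*C := by
    rw [transpose_mul, transpose_mul, transpose_transpose, hWt, ← Matrix.mul_assoc]
  rw [ht]
  constructor
  · intro h; rw [h]; abel
  · intro h; rw [eq_neg_iff_add_eq_zero, add_comm]; exact h

lemma schur_derive {C M₁ M₂ M₃ : Matrix (Fin 3) (Fin 3) ℝ}
    (hU : IsUnit C.det) (hU₁ : IsUnit M₁.det)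
    (hdec : ∀ y : J6 → ℝ, ∃ y₁ y₂ : J6 → ℝ,
      (fromBlocks (-M₁) (C - M₂) (Cᵀ - M₂ᵀ) (-M₃)) *ᵥ y₁ = 0 ∧
      (fromBlocks M₁ (C + M₂) (Cᵀ + M₂ᵀ) M₃) *ᵥ y₂ = 0 ∧ y = y₁ + y₂) :
    M₃ = (Cᵀ + M₂ᵀ) * M₁⁻¹ * (C + M₂) ∧ M₃ = (Cᵀ - M₂ᵀ) * M₁⁻¹ * (C - M₂) := by
  constructor
  · apply mulVec_ext; intro v
    obtain ⟨y₁, y₂, h₁, h₂, hz⟩ := hdec (Sum.elim (-((M₁⁻¹*(C+M₂)) *ᵥ v)) v)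
    rw [← Sum.elim_comp_inl_inr y₁, fromBlocks_mulVec_zero_iff] at h₁
    rw [← Sum.elim_comp_inl_inr y₂, fromBlocks_mulVec_zero_iff] at h₂
    obtain ⟨h₁t, h₁b⟩ := h₁
    obtain ⟨h₂t, h₂b⟩ := h₂
    have hzl : -((M₁⁻¹*(C+M₂)) *ᵥ v) = y₁ ∘ Sum.inl + y₂ ∘ Sum.inl :=
      funext fun i => congrFun hz (Sum.inl i)
    have hzr : v = y₁ ∘ Sum.inr + y₂ ∘ Sum.inr :=
      funext fun i => congrFun hz (Sum.inr i)
    -- M₁ *ᵥ (a₁ + a₂) = -(C+M₂) *ᵥ v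
    have hM1z : M₁ *ᵥ (y₁ ∘ Sum.inl) + M₁ *ᵥ (y₂ ∘ Sum.inl) = -((C+M₂) *ᵥ v) := by
      rw [← Matrix.mulVec_add, ← hzl, Matrix.mulVec_neg, Matrix.mulVec_mulVec,
        Matrix.mul_nonsing_inv_cancel_left _ _ hU₁]
    have e₁ : M₁ *ᵥ (y₁ ∘ Sum.inl) = (C - M₂) *ᵥ (y₁ ∘ Sum.inr) := by
      rw [Matrix.neg_mulVec, add_comm, add_eq_zero_iff_eq_neg, neg_neg] at h₁t
      exact h₁t.symm
    have e₂ : M₁ *ᵥ (y₂ ∘ Sum.inl) = -((C + M₂) *ᵥ (y₂ ∘ Sum.inr)) :=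
      add_eq_zero_iff_eq_neg.mp h₂t
    have hb₁ : C *ᵥ (y₁ ∘ Sum.inr) = 0 := by
      apply two_smul_zero
      have : (C - M₂) *ᵥ (y₁ ∘ Sum.inr) + (C + M₂) *ᵥ (y₁ ∘ Sum.inr) =
          C *ᵥ (y₁ ∘ Sum.inr) + C *ᵥ (y₁ ∘ Sum.inr) := by
        rw [Matrix.sub_mulVec, Matrix.add_mulVec]; abel
      rw [← this]
      have hv : v = (y₁ ∘ Sum.inr) + (y₂ ∘ Sum.inr) := hzr
      rw [e₁, e₂] at hM1z
      rw [hv, Matrix.mulVec_add] at hM1z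
      calc (C - M₂) *ᵥ (y₁ ∘ Sum.inr) + (C + M₂) *ᵥ (y₁ ∘ Sum.inr)
          = ((C - M₂) *ᵥ (y₁ ∘ Sum.inr) + -((C + M₂) *ᵥ (y₂ ∘ Sum.inr)))
            + ((C + M₂) *ᵥ (y₁ ∘ Sum.inr) + (C + M₂) *ᵥ (y₂ ∘ Sum.inr)) := by abel
        _ = -((C + M₂) *ᵥ (y₁ ∘ Sum.inr) + (C + M₂) *ᵥ (y₂ ∘ Sum.inr))
            + ((C + M₂) *ᵥ (y₁ ∘ Sum.inr) + (C + M₂) *ᵥ (y₂ ∘ Sum.inr)) := by rw [hM1z]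
        _ = 0 := by abel
    have hb₁0 : y₁ ∘ Sum.inr = (0 : Fin 3 → ℝ) := mulVec_cancel hU hb₁
    have ha₁0 : y₁ ∘ Sum.inl = (0 : Fin 3 → ℝ) := by
      apply mulVec_cancel hU₁
      rw [e₁, hb₁0, Matrix.mulVec_zero]
    -- so y₂ components are the full vector
    have ha₂ : y₂ ∘ Sum.inl = -((M₁⁻¹*(C+M₂)) *ᵥ v) := by
      rw [hzl, ha₁0, zero_add]
    have hb₂ : y₂ ∘ Sum.inr = v := by
      rw [hzr, hb₁0, zero_add]
    rw [ha₂, hb₂] at h₂b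
    rw [Matrix.mulVec_neg, Matrix.mulVec_mulVec, add_comm, add_eq_zero_iff_eq_neg, neg_neg] at h₂b
    rw [h₂b, Matrix.mul_assoc]
  · apply mulVec_ext; intro v
    obtain ⟨y₁, y₂, h₁, h₂, hz⟩ := hdec (Sum.elim ((M₁⁻¹*(C-M₂)) *ᵥ v) v)
    rw [← Sum.elim_comp_inl_inr y₁, fromBlocks_mulVec_zero_iff] at h₁
    rw [← Sum.elim_comp_inl_inr y₂, fromBlocks_mulVec_zero_iff] at h₂
    obtain ⟨h₁t, h₁b⟩ := h₁
    obtain ⟨h₂t, h₂b⟩ := h₂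
    have hzl : (M₁⁻¹*(C-M₂)) *ᵥ v = y₁ ∘ Sum.inl + y₂ ∘ Sum.inl :=
      funext fun i => congrFun hz (Sum.inl i)
    have hzr : v = y₁ ∘ Sum.inr + y₂ ∘ Sum.inr :=
      funext fun i => congrFun hz (Sum.inr i)
    have hM1z : M₁ *ᵥ (y₁ ∘ Sum.inl) + M₁ *ᵥ (y₂ ∘ Sum.inl) = (C-M₂) *ᵥ v := by
      rw [← Matrix.mulVec_add, ← hzl, Matrix.mulVec_mulVec,
        Matrix.mul_nonsing_inv_cancel_left _ _ hU₁]
    have e₁ : M₁ *ᵥ (y₁ ∘ Sum.inl) = (C - M₂) *ᵥ (y₁ ∘ Sum.inr) := by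
      rw [Matrix.neg_mulVec, add_comm, add_eq_zero_iff_eq_neg, neg_neg] at h₁t
      exact h₁t.symm
    have e₂ : M₁ *ᵥ (y₂ ∘ Sum.inl) = -((C + M₂) *ᵥ (y₂ ∘ Sum.inr)) :=
      add_eq_zero_iff_eq_neg.mp h₂t
    have hb₂' : C *ᵥ (y₂ ∘ Sum.inr) = 0 := by
      apply two_smul_zero
      have : (C - M₂) *ᵥ (y₂ ∘ Sum.inr) + (C + M₂) *ᵥ (y₂ ∘ Sum.inr) =
          C *ᵥ (y₂ ∘ Sum.inr) + C *ᵥ (y₂ ∘ Sum.inr) := by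
        rw [Matrix.sub_mulVec, Matrix.add_mulVec]; abel
      rw [← this]
      have hv : v = (y₁ ∘ Sum.inr) + (y₂ ∘ Sum.inr) := hzr
      rw [e₁, e₂] at hM1z
      rw [hv, Matrix.mulVec_add] at hM1z
      calc (C - M₂) *ᵥ (y₂ ∘ Sum.inr) + (C + M₂) *ᵥ (y₂ ∘ Sum.inr)
          = ((C - M₂) *ᵥ (y₁ ∘ Sum.inr) + (C - M₂) *ᵥ (y₂ ∘ Sum.inr))
            - ((C - M₂) *ᵥ (y₁ ∘ Sum.inr) + -((C + M₂) *ᵥ (y₂ ∘ Sum.inr))) := by abel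
        _ = 0 := by rw [← hM1z]; abel
    have hb₂0 : y₂ ∘ Sum.inr = (0 : Fin 3 → ℝ) := mulVec_cancel hU hb₂'
    have ha₂0 : y₂ ∘ Sum.inl = (0 : Fin 3 → ℝ) := by
      apply mulVec_cancel hU₁
      rw [e₂, hb₂0, Matrix.mulVec_zero, neg_zero]
    have ha₁ : y₁ ∘ Sum.inl = (M₁⁻¹*(C-M₂)) *ᵥ v := by
      rw [hzl, ha₂0, add_zero]
    have hb₁ : y₁ ∘ Sum.inr = v := by
      rw [hzr, hb₂0, add_zero]
    rw [ha₁, hb₁] at h₁b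
    rw [Matrix.neg_mulVec, Matrix.mulVec_mulVec, add_eq_zero_iff_eq_neg, neg_neg] at h₁b
    rw [← h₁b, Matrix.mul_assoc]

lemma swap_mulVec (W X Y Z : Matrix (Fin 3) (Fin 3) ℝ) (y : J6 → ℝ) :
    (fromBlocks Z Y X W) *ᵥ (y ∘ Sum.swap) = ((fromBlocks W X Y Z) *ᵥ y) ∘ Sum.swap := by
  funext i
  rcases i with i | i <;>
    (simp [fromBlocks_mulVec, Sum.swap, Function.comp_def]; ring)

lemma conj_mulVec_zero (X : Matrix J6 J6 ℝ) (x : I9 → ℝ) :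
    ((Pm lam mu ν)ᵀ * X * Pm lam mu ν) *ᵥ x = 0 ↔ X *ᵥ (Pm lam mu ν *ᵥ x) = 0 := by
  constructor
  · intro h
    have h' : (Pm lam mu ν)ᵀ *ᵥ ((X * Pm lam mu ν) *ᵥ x) = 0 := by
      rw [Matrix.mulVec_mulVec, ← Matrix.mul_assoc]; exact h
    have h2 := congrArg (fun w => Qmᵀ *ᵥ w) h'
    simp only [Matrix.mulVec_mulVec, Matrix.mulVec_zero] at h2
    rw [← Matrix.mul_assoc, QtPt_one lam mu ν, Matrix.one_mul] at h2
    rwa [← Matrix.mulVec_mulVec] at h2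
  · intro h
    rw [Matrix.mul_assoc, ← Matrix.mulVec_mulVec, ← Matrix.mulVec_mulVec, h, Matrix.mulVec_zero]

lemma Pm_mulVec (x : I9 → ℝ) :
    Pm lam mu ν *ᵥ x = Sum.elim (x ∘ Sum.inl)
      ((x ∘ Sum.inr ∘ Sum.inl) + Km lam mu ν *ᵥ (x ∘ Sum.inr ∘ Sum.inr)) := by
  rw [Pm, fromBlocks_mulVec, ← Sum.elim_comp_inl_inr (x ∘ Sum.inr), fromCols_mulVec_sumElim]
  simp [Function.comp_assoc]

lemma Anu_ker_vec (hU : IsUnit (Ap lam mu ν).det) (w : Fin 3 → ℝ) :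
    Anu lam mu ν *ᵥ Sum.elim 0 (Sum.elim (-(Km lam mu ν *ᵥ w)) w) = 0 := by
  rw [Anu, fromBlocks_mulVec]
  simp only [Sum.elim_comp_inl, Sum.elim_comp_inr, Matrix.zero_mulVec, Matrix.mulVec_zero,
    zero_add, add_zero, fromCols_mulVec_sumElim]
  rw [Matrix.mulVec_neg, Matrix.mulVec_mulVec, Ap_mul_Km lam mu ν hU]
  funext i
  rcases i with i | i <;> simp [fromRows_mulVec]

lemma BN_add (M : Matrix I9 I9 ℝ) :
    Bm lam mu ν + Nm M = fromBlocks (blk₁ M) (Ap lam mu ν + blk₂ M)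
      ((Ap lam mu ν)ᵀ + (blk₂ M)ᵀ) (blk₃ M) := by
  rw [Bm, Nm, fromBlocks_add, zero_add, zero_add]

lemma BN_sub (M : Matrix I9 I9 ℝ) :
    Bm lam mu ν - Nm M = fromBlocks (-(blk₁ M)) (Ap lam mu ν - blk₂ M)
      ((Ap lam mu ν)ᵀ - (blk₂ M)ᵀ) (-(blk₃ M)) := by
  rw [Bm, Nm, sub_eq_add_neg, fromBlocks_neg, fromBlocks_add, zero_add, zero_add,
    ← sub_eq_add_neg, ← sub_eq_add_neg]

lemma extract_d (hM : M.IsSymm) (hU : IsUnit (Ap lam mu ν).det)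
    (h : ∀ w : Fin 3 → ℝ, M *ᵥ Sum.elim 0 (Sum.elim (-(Km lam mu ν *ᵥ w)) w) = 0) :
    blk₂' M = blk₂ M * (Ap lam mu ν)⁻¹ * App mu ν ∧
    blk₃' M = blk₃ M * (Ap lam mu ν)⁻¹ * App mu ν ∧
    blk₃'' M = (App mu ν)ᵀ * ((Ap lam mu ν)⁻¹)ᵀ * blk₃ M * (Ap lam mu ν)⁻¹ * App mu ν := by
  have comp : ∀ w : Fin 3 → ℝ,
      (blk₂ M *ᵥ (-(Km lam mu ν *ᵥ w)) + blk₂' M *ᵥ w = 0)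
      ∧ (blk₃ M *ᵥ (-(Km lam mu ν *ᵥ w)) + blk₃' M *ᵥ w = 0)
      ∧ ((blk₃' M)ᵀ *ᵥ (-(Km lam mu ν *ᵥ w)) + blk₃'' M *ᵥ w = 0) := by
    intro w
    have hw := h w
    rw [M_blocks hM] at hw
    rw [fromBlocks_mulVec] at hw
    simp only [Sum.elim_comp_inl, Sum.elim_comp_inr, Matrix.mulVec_zero, zero_add, add_zero,
      fromCols_mulVec_sumElim, fromBlocks_mulVec, fromRows_mulVec, Sum.elim_zero_zero] at hw
    refine ⟨?_, ?_, ?_⟩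
    · funext i; simpa using congrFun hw (Sum.inl i)
    · funext i; simpa using congrFun hw (Sum.inr (Sum.inl i))
    · funext i; simpa using congrFun hw (Sum.inr (Sum.inr i))
  have h2 : blk₂' M = blk₂ M * Km lam mu ν := by
    apply mulVec_ext; intro w
    have := (comp w).1
    rwa [Matrix.mulVec_neg, Matrix.mulVec_mulVec, add_comm, add_eq_zero_iff_eq_neg, neg_neg]
      at this
  have h3 : blk₃' M = blk₃ M * Km lam mu ν := by
    apply mulVec_ext; intro w
    have := (comp w).2.1
    rwa [Matrix.mulVec_neg, Matrix.mulVec_mulVec, add_comm, add_eq_zero_iff_eq_neg, neg_neg]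
      at this
  have h4 : blk₃'' M = (blk₃' M)ᵀ * Km lam mu ν := by
    apply mulVec_ext; intro w
    have := (comp w).2.2
    rwa [Matrix.mulVec_neg, Matrix.mulVec_mulVec, add_comm, add_eq_zero_iff_eq_neg, neg_neg]
      at this
  refine ⟨by rw [h2, Km, Matrix.mul_assoc], by rw [h3, Km, Matrix.mul_assoc], ?_⟩
  rw [h4, h3, transpose_mul, blk₃_symm hM]
  simp only [Km, transpose_mul, Matrix.mul_assoc]

end
end Stmt9Aux

open Stmt9Aux in
theorem stmt9 (lam mu : ℝ) (hmu : 0 < mu) (hlm : 0 < 2 * mu + 3 * lam) (ν : Fin 3 → ℝ)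
    (hν : ν 0 ^ 2 + ν 1 ^ 2 + ν 2 ^ 2 = 1)
    (hν0 : ∀ i : Fin 3, ν i ≠ 0)
    (M : Matrix I9 I9 ℝ) (hMsymm : M.IsSymm) :
    IsAdmissible (Anu lam mu ν) M ↔
      ((blk₁ M).PosDef ∧ (blk₃ M).PosDef) ∧
      (((Ap lam mu ν)ᵀ * (blk₁ M)⁻¹ * blk₂ M)ᵀ = -((Ap lam mu ν)ᵀ * (blk₁ M)⁻¹ * blk₂ M) ∧
        (Ap lam mu ν * (blk₃ M)⁻¹ * (blk₂ M)ᵀ)ᵀ = -(Ap lam mu ν * (blk₃ M)⁻¹ * (blk₂ M)ᵀ)) ∧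
      (blk₃ M = (Ap lam mu ν)ᵀ * (blk₁ M)⁻¹ * Ap lam mu ν + (blk₂ M)ᵀ * (blk₁ M)⁻¹ * blk₂ M ∧
        blk₁ M = Ap lam mu ν * (blk₃ M)⁻¹ * (Ap lam mu ν)ᵀ + blk₂ M * (blk₃ M)⁻¹ * (blk₂ M)ᵀ) ∧
      (blk₂' M = blk₂ M * (Ap lam mu ν)⁻¹ * App mu ν ∧
        blk₃' M = blk₃ M * (Ap lam mu ν)⁻¹ * App mu ν ∧
        blk₃'' M = (App mu ν)ᵀ * ((Ap lam mu ν)⁻¹)ᵀ * blk₃ M * (Ap lam mu ν)⁻¹ * App mu ν) ∧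
      ((Anu lam mu ν + M).rank = 3 ∧ (Anu lam mu ν - M).rank = 3) := by
  have hU : IsUnit (Ap lam mu ν).det := isUnit_Ap lam mu hmu hlm ν hν0
  have hUt : IsUnit ((Ap lam mu ν)ᵀ).det := by rwa [Matrix.det_transpose]
  constructor
  · rintro ⟨hsymm, hPSD, hker, hsup⟩
    obtain ⟨hd1, hd2, hd3⟩ := extract_d lam mu ν hMsymm hU
      (fun w => hker _ (Anu_ker_vec lam mu ν hU w))
    have hMPN : M = (Pm lam mu ν)ᵀ * Nm M * Pm lam mu ν := MPNP lam mu ν hMsymm hd1 hd2 hd3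
    have hAeq := Anu_eq lam mu ν hU
    have hApM : Anu lam mu ν + M
        = (Pm lam mu ν)ᵀ * (Bm lam mu ν + Nm M) * Pm lam mu ν := by
      rw [Matrix.mul_add, Matrix.add_mul, ← hAeq, ← hMPN]
    have hAmM : Anu lam mu ν - M
        = (Pm lam mu ν)ᵀ * (Bm lam mu ν - Nm M) * Pm lam mu ν := by
      rw [Matrix.mul_sub, Matrix.sub_mul, ← hAeq, ← hMPN]
    have hdec : ∀ y : J6 → ℝ, ∃ y₁ y₂ : J6 → ℝ,
        (Bm lam mu ν - Nm M) *ᵥ y₁ = 0 ∧ (Bm lam mu ν + Nm M) *ᵥ y₂ = 0 ∧ y = y₁ + y₂ := by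
      intro y
      have hy : (Qm *ᵥ y) ∈ LinearMap.ker (Anu lam mu ν - M).mulVecLin
          ⊔ LinearMap.ker (Anu lam mu ν + M).mulVecLin := by
        rw [hsup]; trivial
      obtain ⟨x₁, hx₁, x₂, hx₂, hxx⟩ := Submodule.mem_sup.mp hy
      refine ⟨Pm lam mu ν *ᵥ x₁, Pm lam mu ν *ᵥ x₂, ?_, ?_, ?_⟩
      · have h1 := LinearMap.mem_ker.mp hx₁
        rw [Matrix.mulVecLin_apply, hAmM] at h1
        exact (conj_mulVec_zero lam mu ν _ x₁).mp h1
      · have h2 := LinearMap.mem_ker.mp hx₂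
        rw [Matrix.mulVecLin_apply, hApM] at h2
        exact (conj_mulVec_zero lam mu ν _ x₂).mp h2
      · have hPQ : Pm lam mu ν *ᵥ (Qm *ᵥ y) = y := by
          rw [Matrix.mulVec_mulVec, PQ_one, Matrix.one_mulVec]
        rw [← hPQ, ← hxx, Matrix.mulVec_add]
    have hNPSD : (Nm M).PosSemidef := by
      have h := hPSD.conjTranspose_mul_mul_same Qm
      rw [conjTranspose_eq_transpose_of_trivial, QMQ hMsymm] at h
      exact h
    have hNPD : (Nm M).PosDef :=
      posdef_of_dec (Bm_symm lam mu ν) (fun y => Bm_inj lam mu ν hU) (Nm_symm hMsymm) hNPSD hdec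
    obtain ⟨hPD1, hPD3⟩ := posdef_blocks (by rw [← Nm]; exact hNPD)
    have hU₁ : IsUnit (blk₁ M).det := isUnit_iff_ne_zero.mpr hPD1.det_pos.ne'
    have hU₃ : IsUnit (blk₃ M).det := isUnit_iff_ne_zero.mpr hPD3.det_pos.ne'
    have hW1s : ((blk₁ M)⁻¹)ᵀ = (blk₁ M)⁻¹ := by
      rw [transpose_nonsing_inv, blk₁_symm hMsymm]
    have hW3s : ((blk₃ M)⁻¹)ᵀ = (blk₃ M)⁻¹ := by
      rw [transpose_nonsing_inv, blk₃_symm hMsymm]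
    have hdecB : ∀ y : J6 → ℝ, ∃ y₁ y₂ : J6 → ℝ,
        (fromBlocks (-(blk₁ M)) (Ap lam mu ν - blk₂ M) ((Ap lam mu ν)ᵀ - (blk₂ M)ᵀ)
          (-(blk₃ M))) *ᵥ y₁ = 0 ∧
        (fromBlocks (blk₁ M) (Ap lam mu ν + blk₂ M) ((Ap lam mu ν)ᵀ + (blk₂ M)ᵀ)
          (blk₃ M)) *ᵥ y₂ = 0 ∧ y = y₁ + y₂ := by
      rw [← BN_sub, ← BN_add]; exact hdec
    obtain ⟨hSp, hSm⟩ := schur_derive hU hU₁ hdecB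
    have hdecBswap : ∀ y : J6 → ℝ, ∃ y₁ y₂ : J6 → ℝ,
        (fromBlocks (-(blk₃ M)) ((Ap lam mu ν)ᵀ - (blk₂ M)ᵀ)
          (((Ap lam mu ν)ᵀ)ᵀ - ((blk₂ M)ᵀ)ᵀ) (-(blk₁ M))) *ᵥ y₁ = 0 ∧
        (fromBlocks (blk₃ M) ((Ap lam mu ν)ᵀ + (blk₂ M)ᵀ)
          (((Ap lam mu ν)ᵀ)ᵀ + ((blk₂ M)ᵀ)ᵀ) (blk₁ M)) *ᵥ y₂ = 0 ∧ y = y₁ + y₂ := by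
      simp only [transpose_transpose]
      intro y
      obtain ⟨y₁, y₂, h₁, h₂, hy⟩ := hdecB (y ∘ Sum.swap)
      refine ⟨y₁ ∘ Sum.swap, y₂ ∘ Sum.swap, ?_, ?_, ?_⟩
      · rw [swap_mulVec, h₁]; funext i; rcases i with i | i <;> rfl
      · rw [swap_mulVec, h₂]; funext i; rcases i with i | i <;> rfl
      · funext i
        have := congrFun hy (Sum.swap i)
        simpa [Sum.swap_swap] using this
    obtain ⟨hTp, hTm⟩ := schur_derive hUt hU₃ hdecBswap
    rw [transpose_transpose] at hTp hTm
    obtain ⟨hskew1, hc1⟩ := schur_combine hSp hSm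
    obtain ⟨hskew3, hc2⟩ := schur_combine hTp hTm
    rw [transpose_transpose] at hskew3 hc2
    refine ⟨⟨hPD1, hPD3⟩, ⟨(skew_iff hW1s).mpr hskew1, ?_⟩, ⟨hc1, hc2⟩, ⟨hd1, hd2, hd3⟩, ?_, ?_⟩
    · have h' := (skew_iff (C := (Ap lam mu ν)ᵀ) (M₂ := (blk₂ M)ᵀ) hW3s).mpr
        (by simp only [transpose_transpose]; exact hskew3)
      simp only [transpose_transpose] at h'
      exact h'
    · rw [hApM, rank_conj, BN_add,
        show (Ap lam mu ν)ᵀ + (blk₂ M)ᵀ = (Ap lam mu ν + blk₂ M)ᵀ from (transpose_add _ _).symm,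
        show blk₃ M = (Ap lam mu ν + blk₂ M)ᵀ * (blk₁ M)⁻¹ * (Ap lam mu ν + blk₂ M) from by
          rw [transpose_add]; exact hSp]
      exact rank_special _ _ hU₁ (blk₁_symm hMsymm)
    · have hdetneg : IsUnit (-(blk₁ M)).det := by
        rw [Matrix.det_neg]
        simpa using hU₁.neg
      have hinvneg : (-(blk₁ M))⁻¹ = -((blk₁ M)⁻¹) := by
        apply Matrix.inv_eq_right_inv
        rw [neg_mul_neg, Matrix.mul_nonsing_inv _ hU₁]
      rw [hAmM, rank_conj, BN_sub,
        show (Ap lam mu ν)ᵀ - (blk₂ M)ᵀ = (Ap lam mu ν - blk₂ M)ᵀ from (transpose_sub _ _).symm,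
        show -(blk₃ M) = (Ap lam mu ν - blk₂ M)ᵀ * (-(blk₁ M))⁻¹ * (Ap lam mu ν - blk₂ M) from by
          rw [hinvneg, transpose_sub]
          rw [Matrix.mul_neg, Matrix.neg_mul, hSm]]
      exact rank_special _ _ hdetneg (by rw [transpose_neg, blk₁_symm hMsymm])
  · rintro ⟨⟨hPD1, hPD3⟩, ⟨hb1, hb2⟩, ⟨hc1, hc2⟩, ⟨hd1, hd2, hd3⟩, -⟩
    have hU₁ : IsUnit (blk₁ M).det := isUnit_iff_ne_zero.mpr hPD1.det_pos.ne'
    have hU₃ : IsUnit (blk₃ M).det := isUnit_iff_ne_zero.mpr hPD3.det_pos.ne'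
    have hW1s : ((blk₁ M)⁻¹)ᵀ = (blk₁ M)⁻¹ := by
      rw [transpose_nonsing_inv, blk₁_symm hMsymm]
    have hskew1 := (skew_iff hW1s).mp hb1
    obtain ⟨hSp, hSm⟩ := schur_of hskew1 hc1
    have hSpT : blk₃ M = (Ap lam mu ν + blk₂ M)ᵀ * (blk₁ M)⁻¹ * (Ap lam mu ν + blk₂ M) := by
      rw [transpose_add]; exact hSp
    have hSmT : blk₃ M = (Ap lam mu ν - blk₂ M)ᵀ * (blk₁ M)⁻¹ * (Ap lam mu ν - blk₂ M) := by
      rw [transpose_sub]; exact hSm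
    have hMPN : M = (Pm lam mu ν)ᵀ * Nm M * Pm lam mu ν := MPNP lam mu ν hMsymm hd1 hd2 hd3
    have hAeq := Anu_eq lam mu ν hU
    have hApM : Anu lam mu ν + M
        = (Pm lam mu ν)ᵀ * (Bm lam mu ν + Nm M) * Pm lam mu ν := by
      rw [Matrix.mul_add, Matrix.add_mul, ← hAeq, ← hMPN]
    have hAmM : Anu lam mu ν - M
        = (Pm lam mu ν)ᵀ * (Bm lam mu ν - Nm M) * Pm lam mu ν := by
      rw [Matrix.mul_sub, Matrix.sub_mul, ← hAeq, ← hMPN]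
    haveI := (blk₁ M).invertibleOfIsUnitDet hU₁
    have hNPSD : (Nm M).PosSemidef := by
      rw [Nm, show (blk₂ M)ᵀ = (blk₂ M)ᴴ from (conjTranspose_eq_transpose_of_trivial _).symm,
        Matrix.PosDef.fromBlocks₁₁ _ _ hPD1, conjTranspose_eq_transpose_of_trivial]
      have he : blk₃ M - (blk₂ M)ᵀ * (blk₁ M)⁻¹ * blk₂ M
          = (Ap lam mu ν)ᵀ * (blk₁ M)⁻¹ * Ap lam mu ν := by
        rw [hc1]; abel
      rw [he]
      have h2 := (hPD1.inv).posSemidef.conjTranspose_mul_mul_same (Ap lam mu ν)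
      rwa [conjTranspose_eq_transpose_of_trivial] at h2
    have hMPSD : M.PosSemidef := by
      have h2 := hNPSD.conjTranspose_mul_mul_same (Pm lam mu ν)
      rwa [conjTranspose_eq_transpose_of_trivial, ← hMPN] at h2
    refine ⟨hMsymm, hMPSD, ?_, ?_⟩
    · intro x hx
      rw [hAeq] at hx
      have hPx : Pm lam mu ν *ᵥ x = 0 :=
        Bm_inj lam mu ν hU ((conj_mulVec_zero lam mu ν _ x).mp hx)
      rw [hMPN, Matrix.mul_assoc, ← Matrix.mulVec_mulVec, ← Matrix.mulVec_mulVec, hPx,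
        Matrix.mulVec_zero, Matrix.mulVec_zero]
    · rw [eq_top_iff]
      rintro x -
      set s : Fin 3 → ℝ := x ∘ Sum.inr ∘ Sum.inl + Km lam mu ν *ᵥ (x ∘ Sum.inr ∘ Sum.inr)
        with hs
      set u : Fin 3 → ℝ := x ∘ Sum.inl with hu
      set vp : Fin 3 → ℝ :=
        (2⁻¹ : ℝ) • ((Ap lam mu ν)⁻¹ *ᵥ ((Ap lam mu ν - blk₂ M) *ᵥ s - blk₁ M *ᵥ u)) with hvp
      set vm : Fin 3 → ℝ := s - vp with hvm
      set um : Fin 3 → ℝ := (blk₁ M)⁻¹ *ᵥ ((Ap lam mu ν - blk₂ M) *ᵥ vm) with hum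
      set xm : I9 → ℝ := Sum.elim um (Sum.elim vm 0) with hxm
      have hum' : blk₁ M *ᵥ um = (Ap lam mu ν - blk₂ M) *ᵥ vm := by
        rw [hum, Matrix.mulVec_mulVec, Matrix.mul_nonsing_inv _ hU₁, Matrix.one_mulVec]
      have hPxm : Pm lam mu ν *ᵥ xm = Sum.elim um vm := by
        rw [Pm_mulVec]
        have e1 : xm ∘ Sum.inl = um := rfl
        have e2 : xm ∘ Sum.inr ∘ Sum.inl = vm := rfl
        have e3 : xm ∘ Sum.inr ∘ Sum.inr = (0 : Fin 3 → ℝ) := rfl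
        rw [e1, e2, e3, Matrix.mulVec_zero, add_zero]
      have hxmmem : xm ∈ LinearMap.ker (Anu lam mu ν - M).mulVecLin := by
        rw [LinearMap.mem_ker, Matrix.mulVecLin_apply, hAmM, conj_mulVec_zero, hPxm, BN_sub,
          fromBlocks_mulVec_zero_iff]
        constructor
        · rw [Matrix.neg_mulVec, hum', neg_add_cancel]
        · rw [hum, Matrix.mulVec_mulVec, Matrix.mulVec_mulVec, Matrix.neg_mulVec,
            show (Ap lam mu ν)ᵀ - (blk₂ M)ᵀ = (Ap lam mu ν - blk₂ M)ᵀ from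
              (transpose_sub _ _).symm,
            ← hSmT, add_neg_cancel]
      have hPxp : Pm lam mu ν *ᵥ (x - xm) = Sum.elim (u - um) vp := by
        rw [Matrix.mulVec_sub, hPxm, Pm_mulVec]
        funext i
        rcases i with i | i
        · simp only [Pi.sub_apply, Sum.elim_inl]; rfl
        · simp only [Pi.sub_apply, Sum.elim_inr]
          show s i - vm i = vp i
          rw [hvm]
          simp only [Pi.sub_apply]
          ring
      have hCvp : Ap lam mu ν *ᵥ vp + Ap lam mu ν *ᵥ vp
          = (Ap lam mu ν - blk₂ M) *ᵥ s - blk₁ M *ᵥ u := by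
        rw [hvp, Matrix.mulVec_smul, Matrix.mulVec_mulVec, Matrix.mul_nonsing_inv _ hU,
          Matrix.one_mulVec]
        module
      have htop : blk₁ M *ᵥ (u - um) + (Ap lam mu ν + blk₂ M) *ᵥ vp = 0 := by
        have hexp : blk₁ M *ᵥ (u - um) + (Ap lam mu ν + blk₂ M) *ᵥ vp
            = (Ap lam mu ν *ᵥ vp + Ap lam mu ν *ᵥ vp)
              - ((Ap lam mu ν - blk₂ M) *ᵥ s - blk₁ M *ᵥ u) := by
          rw [Matrix.mulVec_sub, hum', hvm, Matrix.mulVec_sub (Ap lam mu ν - blk₂ M) s vp]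
          simp only [Matrix.sub_mulVec, Matrix.add_mulVec]
          abel
        rw [hexp, hCvp, sub_self]
      have hxpmem : x - xm ∈ LinearMap.ker (Anu lam mu ν + M).mulVecLin := by
        rw [LinearMap.mem_ker, Matrix.mulVecLin_apply, hApM, conj_mulVec_zero, hPxp, BN_add,
          fromBlocks_mulVec_zero_iff]
        refine ⟨htop, ?_⟩
        have hup : u - um = -((blk₁ M)⁻¹ *ᵥ ((Ap lam mu ν + blk₂ M) *ᵥ vp)) := by
          have h1 : blk₁ M *ᵥ (u - um) = -((Ap lam mu ν + blk₂ M) *ᵥ vp) :=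
            add_eq_zero_iff_eq_neg.mp htop
          calc u - um = (blk₁ M)⁻¹ *ᵥ (blk₁ M *ᵥ (u - um)) := by
                rw [Matrix.mulVec_mulVec, Matrix.nonsing_inv_mul _ hU₁, Matrix.one_mulVec]
            _ = -((blk₁ M)⁻¹ *ᵥ ((Ap lam mu ν + blk₂ M) *ᵥ vp)) := by
                rw [h1, Matrix.mulVec_neg]
        rw [hup, Matrix.mulVec_neg, Matrix.mulVec_mulVec, Matrix.mulVec_mulVec,
          ← hSp, neg_add_cancel]
      exact Submodule.mem_sup.mpr ⟨xm, hxmmem, x - xm, hxpmem, by abel⟩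
end

section
/- Let ν ∈ ℝ³ with |ν| = 1 and ν_i ≠ 0 for i = 1, 2, 3, and let M be an admissible boundary matrix for A_ν. Then for every v ∈ ℝ³ and every symmetric real 3×3 matrix σ, with U(v,σ) := (v, C̃^{−1/2} σ'_pr, μ^{−1/2} σ''_pr) ∈ ℝ⁹, one has: (A_ν + M) · U(v,σ) = 0 if and only if A'_ν M₃⁻¹ (A'_ν + M₂)ᵀ v − σν = 0, and (A_ν − M) · U(v,σ) = 0 if and only if A'_ν M₃⁻¹ (A'_ν − M₂)ᵀ v + σν = 0 (σν denoting the matrix-vector product). -/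
open Matrix

/-- The matrix `C̃^γ`, with diagonal entries `α_γ` and off-diagonal entries `β_γ`. -/
noncomputable def Cpow (lam mu γ : ℝ) : Matrix (Fin 3) (Fin 3) ℝ :=
  Matrix.of fun i j =>
    if i = j then (2 * (2 * mu) ^ γ + (2 * mu + 3 * lam) ^ γ) / 3
    else (- (2 * mu) ^ γ + (2 * mu + 3 * lam) ^ γ) / 3

/-- The vector `U(v,σ) = (v, C̃^{-1/2} σ'_pr, μ^{-1/2} σ''_pr) ∈ ℝ⁹`. -/
noncomputable def Uvec (lam mu : ℝ) (v : Fin 3 → ℝ) (σ : Matrix (Fin 3) (Fin 3) ℝ) : I9 → ℝ :=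
  Sum.elim v
    (Sum.elim ((Cpow lam mu (-(1/2))).mulVec ![σ 0 0, σ 1 1, σ 2 2])
      (fun i => mu ^ (-(1/2) : ℝ) * ![σ 0 1, σ 0 2, σ 1 2] i))


lemma Cpow_mul (lam mu : ℝ) (h1 : 0 < 2*mu) (h2 : 0 < 2*mu+3*lam) (γ δ : ℝ) :
    Cpow lam mu γ * Cpow lam mu δ = Cpow lam mu (γ+δ) := by
  have ha : (2*mu)^γ * (2*mu)^δ = (2*mu)^(γ+δ) := (Real.rpow_add h1 γ δ).symm
  have hb : (2*mu+3*lam)^γ * (2*mu+3*lam)^δ = (2*mu+3*lam)^(γ+δ) := (Real.rpow_add h2 γ δ).symm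
  ext i j
  fin_cases i <;> fin_cases j <;>
    simp [Cpow, Matrix.mul_apply, Fin.sum_univ_three] <;>
    first
      | linear_combination (2/3)*ha + (1/3)*hb
      | linear_combination (-1/3)*ha + (1/3)*hb

lemma Cpow_zero (lam mu : ℝ) : Cpow lam mu 0 = 1 := by
  ext i j
  fin_cases i <;> fin_cases j <;>
    simp [Cpow, Matrix.one_apply] <;> norm_num

lemma Ap_eq (lam mu : ℝ) (ν : Fin 3 → ℝ) :
    Ap lam mu ν = (-Matrix.diagonal ν) * Cpow lam mu (1/2) := by
  ext i j
  fin_cases i <;> fin_cases j <;>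
    simp [Ap, Cpow, alph, bet, Real.sqrt_eq_rpow, Matrix.mul_apply, Fin.sum_univ_three,
      Matrix.diagonal] <;> ring

lemma Ap_mul_Cneg (lam mu : ℝ) (h1 : 0 < 2*mu) (h2 : 0 < 2*mu+3*lam) (ν : Fin 3 → ℝ) :
    Ap lam mu ν * Cpow lam mu (-(1/2)) = -Matrix.diagonal ν := by
  rw [Ap_eq, Matrix.mul_assoc, Cpow_mul lam mu h1 h2]
  norm_num [Cpow_zero]

lemma det_Ap_s10 (lam mu : ℝ) (h1 : 0 < 2*mu) (h2 : 0 < 2*mu+3*lam) (ν : Fin 3 → ℝ)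
    (hν0 : ∀ i : Fin 3, ν i ≠ 0) : (Ap lam mu ν).det ≠ 0 := by
  have hAA : (2*mu)^(1/2:ℝ) * (2*mu)^(1/2:ℝ) = 2*mu := by
    rw [← Real.rpow_add h1]; norm_num
  have hdetC : (Cpow lam mu (1/2)).det = (2*mu) * (2*mu+3*lam)^(1/2:ℝ) := by
    rw [Matrix.det_fin_three]
    simp only [Cpow, Matrix.of_apply, Fin.reduceEq, reduceIte, if_true, if_false]
    linear_combination ((2*mu+3*lam)^(1/2:ℝ)) * hAA
  have hB : (0:ℝ) < (2*mu+3*lam)^(1/2:ℝ) := Real.rpow_pos_of_pos h2 _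
  rw [Ap_eq, Matrix.det_mul, Matrix.det_neg, Matrix.det_diagonal, hdetC]
  refine mul_ne_zero (mul_ne_zero ?_ ?_) ?_
  · norm_num
  · rw [Fin.prod_univ_three]
    exact mul_ne_zero (mul_ne_zero (hν0 0) (hν0 1)) (hν0 2)
  · positivity

lemma App_eq (mu : ℝ) (ν : Fin 3 → ℝ) (hmu : 0 < mu) (w : Fin 3 → ℝ) :
    App mu ν *ᵥ (fun i => mu ^ (-(1/2):ℝ) * w i) =
      -(!![ν 1, ν 2, 0; ν 0, 0, ν 2; 0, ν 0, ν 1] *ᵥ w) := by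
  have hs : Real.sqrt mu * mu ^ (-(1/2):ℝ) = 1 := by
    rw [Real.sqrt_eq_rpow, ← Real.rpow_add hmu]; norm_num
  have : (fun i => mu ^ (-(1/2):ℝ) * w i) = mu ^ (-(1/2):ℝ) • w := rfl
  rw [this, App, Matrix.smul_mulVec, Matrix.mulVec_smul, smul_smul]
  have h2 : -Real.sqrt mu * mu ^ (-(1/2):ℝ) = -1 := by linear_combination -hs
  rw [h2, neg_one_smul]

lemma key_sigma (lam mu : ℝ) (h1 : 0 < 2*mu) (h2 : 0 < 2*mu+3*lam) (hmu : 0 < mu)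
    (ν : Fin 3 → ℝ) (σ : Matrix (Fin 3) (Fin 3) ℝ) (hσ : σ.IsSymm) :
    Ap lam mu ν *ᵥ ((Cpow lam mu (-(1/2))) *ᵥ ![σ 0 0, σ 1 1, σ 2 2])
      + App mu ν *ᵥ (fun i => mu ^ (-(1/2):ℝ) * ![σ 0 1, σ 0 2, σ 1 2] i)
      = -(σ *ᵥ ν) := by
  rw [Matrix.mulVec_mulVec, Ap_mul_Cneg lam mu h1 h2, App_eq mu ν hmu, Matrix.neg_mulVec]
  have e10 : σ 1 0 = σ 0 1 := congrFun (congrFun hσ 0) 1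
  have e20 : σ 2 0 = σ 0 2 := congrFun (congrFun hσ 0) 2
  have e21 : σ 2 1 = σ 1 2 := congrFun (congrFun hσ 1) 2
  funext i
  fin_cases i <;>
    simp [Matrix.mulVec, dotProduct, Fin.sum_univ_three, Matrix.diagonal_apply,
      e10, e20, e21] <;>
    ring

lemma mulVec_I9 (M : Matrix I9 I9 ℝ) (v p q : Fin 3 → ℝ) :
    M.mulVec (Sum.elim v (Sum.elim p q)) =
      Sum.elim (blk₁ M *ᵥ v + blk₂ M *ᵥ p + blk₂' M *ᵥ q)
        (Sum.elim (M.submatrix (Sum.inr ∘ Sum.inl) Sum.inl *ᵥ v + blk₃ M *ᵥ p + blk₃' M *ᵥ q)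
          (M.submatrix (Sum.inr ∘ Sum.inr) Sum.inl *ᵥ v +
            M.submatrix (Sum.inr ∘ Sum.inr) (Sum.inr ∘ Sum.inl) *ᵥ p + blk₃'' M *ᵥ q)) := by
  funext j
  rcases j with j | j | j <;>
    simp [Matrix.mulVec, dotProduct, Fintype.sum_sum_type, blk₁, blk₂, blk₂', blk₃,
      blk₃', blk₃'', Finset.sum_add_distrib] <;> ring

lemma Anu_mulVec (lam mu : ℝ) (ν : Fin 3 → ℝ) (v p q : Fin 3 → ℝ) :
    (Anu lam mu ν).mulVec (Sum.elim v (Sum.elim p q)) =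
      Sum.elim (Ap lam mu ν *ᵥ p + App mu ν *ᵥ q)
        (Sum.elim ((Ap lam mu ν)ᵀ *ᵥ v) ((App mu ν)ᵀ *ᵥ v)) := by
  funext j
  rcases j with j | j | j <;>
    simp [Anu, Matrix.mulVec, dotProduct, Fintype.sum_sum_type, Matrix.fromBlocks,
      Matrix.fromCols, Matrix.fromRows_apply_inl, Matrix.fromRows_apply_inr,
      Finset.sum_add_distrib] <;> ring

lemma sum_elim_eq_zero {α β : Type*} {a : α → ℝ} {b : β → ℝ} :
    Sum.elim a b = (0 : α ⊕ β → ℝ) ↔ a = 0 ∧ b = 0 := by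
  constructor
  · intro h
    exact ⟨funext fun i => congrFun h (Sum.inl i), funext fun i => congrFun h (Sum.inr i)⟩
  · rintro ⟨rfl, rfl⟩
    funext i; cases i <;> rfl

lemma sum_elim_add {α β : Type*} (a c : α → ℝ) (b d : β → ℝ) :
    Sum.elim a b + Sum.elim c d = Sum.elim (a + c) (b + d) := by
  funext i; cases i <;> rfl

lemma sum_elim_sub {α β : Type*} (a c : α → ℝ) (b d : β → ℝ) :
    Sum.elim a b - Sum.elim c d = Sum.elim (a - c) (b - d) := by
  funext i; cases i <;> rfl

lemma eq_of_forall_mulVec {n : ℕ} {P Q : Matrix (Fin n) (Fin n) ℝ}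
    (h : ∀ w, P *ᵥ w = Q *ᵥ w) : P = Q := by
  ext i j
  have := congrFun (h (Pi.single j 1)) i
  simpa [Matrix.mulVec_single] using this

lemma dotProduct_self_nonneg' {n : Type*} [Fintype n] (v : n → ℝ) : 0 ≤ v ⬝ᵥ v :=
  Finset.sum_nonneg fun i _ => mul_self_nonneg _

lemma vec_eq_neg_of_add_eq_zero {n : Type*} {a b : n → ℝ} (h : a + b = 0) : b = -a := by
  funext i
  have h' := congrFun h i
  simp only [Pi.add_apply, Pi.zero_apply] at h'
  simp only [Pi.neg_apply]
  linarith

lemma vec_eq_of_sub_eq_zero {n : Type*} {a b : n → ℝ} (h : a - b = 0) : a = b := by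
  funext i
  have h' := congrFun h i
  simp only [Pi.sub_apply, Pi.zero_apply] at h'
  linarith

lemma x_decomp (x : I9 → ℝ) :
    x = Sum.elim (x ∘ Sum.inl) (Sum.elim (x ∘ Sum.inr ∘ Sum.inl) (x ∘ Sum.inr ∘ Sum.inr)) := by
  funext i; rcases i with i | i | i <;> rfl

theorem stmt10 (lam mu : ℝ) (hmu : 0 < mu) (hlm : 0 < 2 * mu + 3 * lam) (ν : Fin 3 → ℝ)
    (hν : ν 0 ^ 2 + ν 1 ^ 2 + ν 2 ^ 2 = 1)
    (hν0 : ∀ i : Fin 3, ν i ≠ 0)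
    (M : Matrix I9 I9 ℝ) (hM : IsAdmissible (Anu lam mu ν) M)
    (v : Fin 3 → ℝ) (σ : Matrix (Fin 3) (Fin 3) ℝ) (hσ : σ.IsSymm) :
    ((Anu lam mu ν + M).mulVec (Uvec lam mu v σ) = 0 ↔
        (Ap lam mu ν * (blk₃ M)⁻¹ * (Ap lam mu ν + blk₂ M)ᵀ).mulVec v - σ.mulVec ν = 0) ∧
      ((Anu lam mu ν - M).mulVec (Uvec lam mu v σ) = 0 ↔
        (Ap lam mu ν * (blk₃ M)⁻¹ * (Ap lam mu ν - blk₂ M)ᵀ).mulVec v + σ.mulVec ν = 0) := by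
  obtain ⟨hsym, hpsd, hker, hsup⟩ := hM
  have h2mu : (0:ℝ) < 2 * mu := by linarith
  set A1 := Ap lam mu ν with hA1def
  set A2 := App mu ν with hA2def
  have hdetA1 : A1.det ≠ 0 := det_Ap_s10 lam mu h2mu hlm ν hν0
  have hA1u : IsUnit A1.det := isUnit_iff_ne_zero.mpr hdetA1
  set K := A1⁻¹ * A2 with hKdef
  have hA1K : A1 * K = A2 := Matrix.mul_nonsing_inv_cancel_left A1 A2 hA1u
  have hA1inj : ∀ x : Fin 3 → ℝ, A1 *ᵥ x = 0 → x = 0 := by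
    intro x hx
    calc x = (A1⁻¹ * A1) *ᵥ x := by
            rw [Matrix.nonsing_inv_mul A1 hA1u, Matrix.one_mulVec]
      _ = A1⁻¹ *ᵥ (A1 *ᵥ x) := by rw [← Matrix.mulVec_mulVec]
      _ = 0 := by rw [hx, Matrix.mulVec_zero]
  set M1 := blk₁ M with hM1def
  set M2 := blk₂ M with hM2def
  set M2' := blk₂' M with hM2'def
  set M3 := blk₃ M with hM3def
  set M3' := blk₃' M with hM3'def
  set M3'' := blk₃'' M with hM3''def
  have hsym' : ∀ a b, M a b = M b a := fun a b => (congrFun (congrFun hsym b) a)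
  have hM21 : M.submatrix (Sum.inr ∘ Sum.inl) Sum.inl = M2ᵀ := by
    ext i j
    simp only [hM2def, blk₂, Matrix.submatrix_apply, Matrix.transpose_apply, Function.comp]
    exact hsym' _ _
  have hM21' : M.submatrix (Sum.inr ∘ Sum.inr) Sum.inl = M2'ᵀ := by
    ext i j
    simp only [hM2'def, blk₂', Matrix.submatrix_apply, Matrix.transpose_apply, Function.comp]
    exact hsym' _ _
  have hM32 : M.submatrix (Sum.inr ∘ Sum.inr) (Sum.inr ∘ Sum.inl) = M3'ᵀ := by
    ext i j
    simp only [hM3'def, blk₃', Matrix.submatrix_apply, Matrix.transpose_apply, Function.comp]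
    exact hsym' _ _
  have hM3symm : M3ᵀ = M3 := by
    ext i j
    simp only [hM3def, blk₃, Matrix.submatrix_apply, Matrix.transpose_apply, Function.comp]
    exact hsym' _ _
  have hMmul : ∀ vv pp qq : Fin 3 → ℝ, M *ᵥ (Sum.elim vv (Sum.elim pp qq)) =
      Sum.elim (M1 *ᵥ vv + M2 *ᵥ pp + M2' *ᵥ qq)
        (Sum.elim (M2ᵀ *ᵥ vv + M3 *ᵥ pp + M3' *ᵥ qq)
          (M2'ᵀ *ᵥ vv + M3'ᵀ *ᵥ pp + M3'' *ᵥ qq)) := by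
    intro vv pp qq
    rw [mulVec_I9, hM21, hM21', hM32]
  -- kernel relations
  have hMker : ∀ w : Fin 3 → ℝ, M *ᵥ (Sum.elim 0 (Sum.elim (-(K *ᵥ w)) w)) = 0 := by
    intro w
    apply hker
    rw [Anu_mulVec]
    have h1 : A1 *ᵥ (-(K *ᵥ w)) + A2 *ᵥ w = 0 := by
      rw [Matrix.mulVec_neg, Matrix.mulVec_mulVec, hA1K]
      simp
    rw [h1]
    simp only [Matrix.mulVec_zero]
    funext i; rcases i with i | i | i <;> rfl
  have hb2' : M2' = M2 * K := by
    apply eq_of_forall_mulVec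
    intro w
    have h := hMker w
    rw [hMmul] at h
    have h1 := (sum_elim_eq_zero.mp h).1
    rw [Matrix.mulVec_zero, Matrix.mulVec_neg] at h1
    rw [← Matrix.mulVec_mulVec]
    funext i
    have h2 := congrFun h1 i
    simp only [Pi.add_apply, Pi.neg_apply, Pi.zero_apply, zero_add] at h2
    linarith
  have hb3' : M3' = M3 * K := by
    apply eq_of_forall_mulVec
    intro w
    have h := hMker w
    rw [hMmul] at h
    have h1 := (sum_elim_eq_zero.mp (sum_elim_eq_zero.mp h).2).1
    rw [Matrix.mulVec_zero, Matrix.mulVec_neg] at h1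
    rw [← Matrix.mulVec_mulVec]
    funext i
    have h2 := congrFun h1 i
    simp only [Pi.add_apply, Pi.neg_apply, Pi.zero_apply, zero_add] at h2
    linarith
  have hb3'' : M3'' = Kᵀ * M3 * K := by
    have step : M3'' = M3'ᵀ * K := by
      apply eq_of_forall_mulVec
      intro w
      have h := hMker w
      rw [hMmul] at h
      have h1 := (sum_elim_eq_zero.mp (sum_elim_eq_zero.mp h).2).2
      rw [Matrix.mulVec_zero, Matrix.mulVec_neg] at h1
      rw [← Matrix.mulVec_mulVec]
      funext i
      have h2 := congrFun h1 i
      simp only [Pi.add_apply, Pi.neg_apply, Pi.zero_apply, zero_add] at h2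
      linarith
    rw [step, hb3', Matrix.transpose_mul, hM3symm, Matrix.mul_assoc]
  -- row computations
  have hplus : ∀ vv pp qq : Fin 3 → ℝ,
      (Anu lam mu ν + M) *ᵥ Sum.elim vv (Sum.elim pp qq) =
      Sum.elim ((A1 + M2) *ᵥ (pp + K *ᵥ qq) + M1 *ᵥ vv)
        (Sum.elim ((A1 + M2)ᵀ *ᵥ vv + M3 *ᵥ (pp + K *ᵥ qq))
          (Kᵀ *ᵥ ((A1 + M2)ᵀ *ᵥ vv + M3 *ᵥ (pp + K *ᵥ qq)))) := by
    intro vv pp qq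
    rw [Matrix.add_mulVec, Anu_mulVec, hMmul, sum_elim_add, sum_elim_add, ← hA1def, ← hA2def]
    have e1 : A1 *ᵥ pp + A2 *ᵥ qq + (M1 *ᵥ vv + M2 *ᵥ pp + M2' *ᵥ qq)
        = (A1 + M2) *ᵥ (pp + K *ᵥ qq) + M1 *ᵥ vv := by
      simp only [hb2', ← hA1K, Matrix.add_mulVec, Matrix.mulVec_add, ← Matrix.mulVec_mulVec]
      abel
    have e2 : A1ᵀ *ᵥ vv + (M2ᵀ *ᵥ vv + M3 *ᵥ pp + M3' *ᵥ qq)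
        = (A1 + M2)ᵀ *ᵥ vv + M3 *ᵥ (pp + K *ᵥ qq) := by
      simp only [hb3', Matrix.transpose_add, Matrix.add_mulVec, Matrix.mulVec_add,
        ← Matrix.mulVec_mulVec]
      abel
    have e3 : A2ᵀ *ᵥ vv + (M2'ᵀ *ᵥ vv + M3'ᵀ *ᵥ pp + M3'' *ᵥ qq)
        = Kᵀ *ᵥ ((A1 + M2)ᵀ *ᵥ vv + M3 *ᵥ (pp + K *ᵥ qq)) := by
      simp only [hb2', hb3', hb3'', ← hA1K, Matrix.transpose_mul, Matrix.transpose_add,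
        hM3symm, Matrix.add_mulVec, Matrix.mulVec_add, ← Matrix.mulVec_mulVec]
      abel
    rw [e1, e2, e3]
  have hminus : ∀ vv pp qq : Fin 3 → ℝ,
      (Anu lam mu ν - M) *ᵥ Sum.elim vv (Sum.elim pp qq) =
      Sum.elim ((A1 - M2) *ᵥ (pp + K *ᵥ qq) - M1 *ᵥ vv)
        (Sum.elim ((A1 - M2)ᵀ *ᵥ vv - M3 *ᵥ (pp + K *ᵥ qq))
          (Kᵀ *ᵥ ((A1 - M2)ᵀ *ᵥ vv - M3 *ᵥ (pp + K *ᵥ qq)))) := by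
    intro vv pp qq
    rw [Matrix.sub_mulVec, Anu_mulVec, hMmul, sum_elim_sub, sum_elim_sub, ← hA1def, ← hA2def]
    have e1 : A1 *ᵥ pp + A2 *ᵥ qq - (M1 *ᵥ vv + M2 *ᵥ pp + M2' *ᵥ qq)
        = (A1 - M2) *ᵥ (pp + K *ᵥ qq) - M1 *ᵥ vv := by
      simp only [hb2', ← hA1K, Matrix.sub_mulVec, Matrix.mulVec_add, ← Matrix.mulVec_mulVec]
      abel
    have e2 : A1ᵀ *ᵥ vv - (M2ᵀ *ᵥ vv + M3 *ᵥ pp + M3' *ᵥ qq)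
        = (A1 - M2)ᵀ *ᵥ vv - M3 *ᵥ (pp + K *ᵥ qq) := by
      simp only [hb3', Matrix.transpose_sub, Matrix.sub_mulVec, Matrix.mulVec_add,
        ← Matrix.mulVec_mulVec]
      abel
    have e3 : A2ᵀ *ᵥ vv - (M2'ᵀ *ᵥ vv + M3'ᵀ *ᵥ pp + M3'' *ᵥ qq)
        = Kᵀ *ᵥ ((A1 - M2)ᵀ *ᵥ vv - M3 *ᵥ (pp + K *ᵥ qq)) := by
      simp only [hb2', hb3', hb3'', ← hA1K, Matrix.transpose_mul, Matrix.transpose_sub,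
        hM3symm, Matrix.sub_mulVec, Matrix.mulVec_add, Matrix.mulVec_sub,
        ← Matrix.mulVec_mulVec]
      abel
    rw [e1, e2, e3]
  -- M3 is invertible
  have hM3det : M3.det ≠ 0 := by
    intro hdet0
    obtain ⟨z, hz0, hz⟩ := (Matrix.exists_mulVec_eq_zero_iff).mpr hdet0
    have hM2z : M2 *ᵥ z = 0 := by
      set d := M2 *ᵥ z with hd
      set c := d ⬝ᵥ (M1 *ᵥ d) with hc
      have hM3z' : M3'ᵀ *ᵥ z = 0 := by
        rw [hb3', Matrix.transpose_mul, hM3symm, ← Matrix.mulVec_mulVec, hz,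
          Matrix.mulVec_zero]
      have hcnn : 0 ≤ c := by
        have h0 := hpsd.dotProduct_mulVec_nonneg (Sum.elim d (Sum.elim 0 0))
        rw [star_trivial, hMmul] at h0
        simp only [sumElim_dotProduct_sumElim, Matrix.mulVec_zero, add_zero,
          zero_dotProduct, dotProduct_zero] at h0
        rw [hc]
        linarith [h0]
      have hzM2d : ∀ w : Fin 3 → ℝ, z ⬝ᵥ (M2ᵀ *ᵥ w) = d ⬝ᵥ w := by
        intro w
        rw [Matrix.dotProduct_mulVec, Matrix.vecMul_transpose]
      have hq : ∀ t : ℝ, 0 ≤ c * t ^ 2 + 2 * t * (d ⬝ᵥ d) := by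
        intro t
        have h0 := hpsd.dotProduct_mulVec_nonneg (Sum.elim (t • d) (Sum.elim z 0))
        rw [star_trivial, hMmul] at h0
        rw [sumElim_dotProduct_sumElim, sumElim_dotProduct_sumElim] at h0
        rw [Matrix.mulVec_zero, Matrix.mulVec_zero, Matrix.mulVec_zero, hz, ← hd] at h0
        simp only [add_zero, dotProduct_add, zero_dotProduct,
          Matrix.mulVec_smul, dotProduct_smul, smul_dotProduct,
          smul_eq_mul, mul_zero, hzM2d, ← hc] at h0
        calc (0:ℝ) ≤ t * (t * c) + t * (d ⬝ᵥ d) + t * (d ⬝ᵥ d) := h0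
          _ = c * t ^ 2 + 2 * t * (d ⬝ᵥ d) := by ring
      have he : 0 ≤ d ⬝ᵥ d := dotProduct_self_nonneg' d
      have hdd : d ⬝ᵥ d = 0 := by
        by_contra hne
        have hpos : 0 < d ⬝ᵥ d := lt_of_le_of_ne he (Ne.symm hne)
        have hc1 : (0:ℝ) < c + 1 := by linarith
        have h := hq (-((d ⬝ᵥ d) / (c + 1)))
        have heq : c * (-((d ⬝ᵥ d) / (c + 1))) ^ 2 + 2 * (-((d ⬝ᵥ d) / (c + 1))) * (d ⬝ᵥ d)
            = ((d ⬝ᵥ d) ^ 2 / (c + 1)) * (c / (c + 1) - 2) := by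
          field_simp
          ring
        rw [heq] at h
        have hfac : c / (c + 1) - 2 < 0 := by
          have : c / (c + 1) < 1 := (div_lt_one hc1).mpr (by linarith)
          linarith
        have hneg : ((d ⬝ᵥ d) ^ 2 / (c + 1)) * (c / (c + 1) - 2) < 0 :=
          mul_neg_of_pos_of_neg (by positivity) hfac
        linarith
      exact dotProduct_self_eq_zero.mp hdd
    set tv := A1 *ᵥ z with htv
    have hzM3 : z ᵥ* M3 = 0 := by rw [← hM3symm, Matrix.vecMul_transpose, hz]
    have hdotp : ∀ x : I9 → ℝ, (Anu lam mu ν + M) *ᵥ x = 0 → tv ⬝ᵥ (x ∘ Sum.inl) = 0 := by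
      intro x hx
      rw [x_decomp x, hplus] at hx
      have h2 := (sum_elim_eq_zero.mp (sum_elim_eq_zero.mp hx).2).1
      have e1 : z ⬝ᵥ ((A1 + M2)ᵀ *ᵥ (x ∘ Sum.inl)) = tv ⬝ᵥ (x ∘ Sum.inl) := by
        rw [Matrix.dotProduct_mulVec, Matrix.vecMul_transpose, Matrix.add_mulVec, hM2z,
          add_zero, htv]
      have e2 : z ⬝ᵥ (M3 *ᵥ (x ∘ Sum.inr ∘ Sum.inl + K *ᵥ (x ∘ Sum.inr ∘ Sum.inr))) = 0 := by
        rw [Matrix.dotProduct_mulVec, hzM3, zero_dotProduct]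
      have h3 := congrArg (fun y => z ⬝ᵥ y) h2
      simp only [dotProduct_add, dotProduct_zero, e1, e2, add_zero] at h3
      exact h3
    have hdotm : ∀ x : I9 → ℝ, (Anu lam mu ν - M) *ᵥ x = 0 → tv ⬝ᵥ (x ∘ Sum.inl) = 0 := by
      intro x hx
      rw [x_decomp x, hminus] at hx
      have h2 := (sum_elim_eq_zero.mp (sum_elim_eq_zero.mp hx).2).1
      have e1 : z ⬝ᵥ ((A1 - M2)ᵀ *ᵥ (x ∘ Sum.inl)) = tv ⬝ᵥ (x ∘ Sum.inl) := by
        rw [Matrix.dotProduct_mulVec, Matrix.vecMul_transpose, Matrix.sub_mulVec, hM2z,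
          sub_zero, htv]
      have e2 : z ⬝ᵥ (M3 *ᵥ (x ∘ Sum.inr ∘ Sum.inl + K *ᵥ (x ∘ Sum.inr ∘ Sum.inr))) = 0 := by
        rw [Matrix.dotProduct_mulVec, hzM3, zero_dotProduct]
      have h3 := congrArg (fun y => z ⬝ᵥ y) h2
      simp only [dotProduct_sub, dotProduct_zero, e1, e2, sub_zero] at h3
      exact h3
    have hmem : Sum.elim tv (0 : Fin 3 ⊕ Fin 3 → ℝ) ∈
        LinearMap.ker (Anu lam mu ν - M).mulVecLin ⊔
          LinearMap.ker (Anu lam mu ν + M).mulVecLin := by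
      rw [hsup]; exact Submodule.mem_top
    obtain ⟨y, hy, y', hy', hsum2⟩ := Submodule.mem_sup.mp hmem
    have hyk : (Anu lam mu ν - M) *ᵥ y = 0 := by
      have := LinearMap.mem_ker.mp hy
      rwa [Matrix.mulVecLin_apply] at this
    have hy'k : (Anu lam mu ν + M) *ᵥ y' = 0 := by
      have := LinearMap.mem_ker.mp hy'
      rwa [Matrix.mulVecLin_apply] at this
    have hcomp : (y ∘ Sum.inl) + (y' ∘ Sum.inl) = tv := by
      funext i
      exact congrFun hsum2 (Sum.inl i)
    have htvtv : tv ⬝ᵥ tv = 0 := by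
      have h4 : tv ⬝ᵥ ((y ∘ Sum.inl) + (y' ∘ Sum.inl)) = 0 := by
        rw [dotProduct_add, hdotm y hyk, hdotp y' hy'k, add_zero]
      rwa [hcomp] at h4
    exact hz0 (hA1inj z (dotProduct_self_eq_zero.mp htvtv))
  have hM3u : IsUnit M3.det := isUnit_iff_ne_zero.mpr hM3det
  have hM3invmul : ∀ w : Fin 3 → ℝ, M3⁻¹ *ᵥ (M3 *ᵥ w) = w := by
    intro w
    rw [Matrix.mulVec_mulVec, Matrix.nonsing_inv_mul _ hM3u, Matrix.one_mulVec]
  have hM3mulinv : ∀ w : Fin 3 → ℝ, M3 *ᵥ (M3⁻¹ *ᵥ w) = w := by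
    intro w
    rw [Matrix.mulVec_mulVec, Matrix.mul_nonsing_inv _ hM3u, Matrix.one_mulVec]
  set Sp := M1 - (A1 + M2) * M3⁻¹ * (A1 + M2)ᵀ with hSpdef
  set Sm := M1 - (A1 - M2) * M3⁻¹ * (A1 - M2)ᵀ with hSmdef
  set Bp := -(M3⁻¹ * (A1 + M2)ᵀ) with hBpdef
  set Bm := M3⁻¹ * (A1 - M2)ᵀ with hBmdef
  set Pmat : Matrix (Fin 3 ⊕ Fin 3) I9 ℝ :=
    Matrix.fromBlocks 1 0 0 (Matrix.fromCols 1 K) with hPmatdef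
  have hPmul : ∀ vv pp qq : Fin 3 → ℝ,
      Pmat *ᵥ Sum.elim vv (Sum.elim pp qq) = Sum.elim vv (pp + K *ᵥ qq) := by
    intro vv pp qq
    rw [hPmatdef]
    simp [Matrix.fromBlocks_mulVec]
  have hsubp : Submodule.map Pmat.mulVecLin (LinearMap.ker (Anu lam mu ν + M).mulVecLin)
      ≤ Submodule.map (Matrix.fromRows 1 Bp).mulVecLin (LinearMap.ker Sp.mulVecLin) := by
    rintro y ⟨x, hx, rfl⟩
    have hx0 : (Anu lam mu ν + M) *ᵥ x = 0 := by
      have := LinearMap.mem_ker.mp hx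
      rwa [Matrix.mulVecLin_apply] at this
    rw [x_decomp x, hplus] at hx0
    have h1 := sum_elim_eq_zero.mp hx0
    have r1 := h1.1
    have r2 := (sum_elim_eq_zero.mp h1.2).1
    set vv := x ∘ Sum.inl with hvv
    set uu := (x ∘ Sum.inr ∘ Sum.inl) + K *ᵥ (x ∘ Sum.inr ∘ Sum.inr) with huu
    have hu : uu = Bp *ᵥ vv := by
      have hM3uu : M3 *ᵥ uu = -((A1 + M2)ᵀ *ᵥ vv) := vec_eq_neg_of_add_eq_zero r2
      have hX : (A1 + M2)ᵀ *ᵥ vv = -(M3 *ᵥ uu) := by rw [hM3uu, neg_neg]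
      rw [hBpdef, Matrix.neg_mulVec, ← Matrix.mulVec_mulVec, hX, Matrix.mulVec_neg,
        hM3invmul, neg_neg]
    have hSv : Sp *ᵥ vv = 0 := by
      have hbig : ((A1 + M2) * M3⁻¹ * (A1 + M2)ᵀ) *ᵥ vv = -((A1 + M2) *ᵥ uu) := by
        have hh : (M3⁻¹ * (A1 + M2)ᵀ) *ᵥ vv = -uu := by
          rw [hu, hBpdef, Matrix.neg_mulVec, neg_neg]
        calc ((A1 + M2) * M3⁻¹ * (A1 + M2)ᵀ) *ᵥ vv
            = (A1 + M2) *ᵥ ((M3⁻¹ * (A1 + M2)ᵀ) *ᵥ vv) := by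
              rw [Matrix.mulVec_mulVec, Matrix.mul_assoc]
          _ = -((A1 + M2) *ᵥ uu) := by rw [hh, Matrix.mulVec_neg]
      rw [hSpdef, Matrix.sub_mulVec, hbig, sub_neg_eq_add, add_comm]
      exact r1
    refine ⟨vv, LinearMap.mem_ker.mpr ?_, ?_⟩
    · rw [Matrix.mulVecLin_apply, hSv]
    · rw [Matrix.mulVecLin_apply, Matrix.mulVecLin_apply, Matrix.fromRows_mulVec,
        Matrix.one_mulVec, ← hu]
      conv_rhs => rw [x_decomp x]
      rw [hPmul]
  have hsubm : Submodule.map Pmat.mulVecLin (LinearMap.ker (Anu lam mu ν - M).mulVecLin)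
      ≤ Submodule.map (Matrix.fromRows 1 Bm).mulVecLin (LinearMap.ker Sm.mulVecLin) := by
    rintro y ⟨x, hx, rfl⟩
    have hx0 : (Anu lam mu ν - M) *ᵥ x = 0 := by
      have := LinearMap.mem_ker.mp hx
      rwa [Matrix.mulVecLin_apply] at this
    rw [x_decomp x, hminus] at hx0
    have h1 := sum_elim_eq_zero.mp hx0
    have r1 := h1.1
    have r2 := (sum_elim_eq_zero.mp h1.2).1
    set vv := x ∘ Sum.inl with hvv
    set uu := (x ∘ Sum.inr ∘ Sum.inl) + K *ᵥ (x ∘ Sum.inr ∘ Sum.inr) with huu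
    have hM3uu : M3 *ᵥ uu = (A1 - M2)ᵀ *ᵥ vv := (vec_eq_of_sub_eq_zero r2).symm
    have hu : uu = Bm *ᵥ vv := by
      rw [hBmdef, ← Matrix.mulVec_mulVec, ← hM3uu, hM3invmul]
    have hSv : Sm *ᵥ vv = 0 := by
      have hbig : ((A1 - M2) * M3⁻¹ * (A1 - M2)ᵀ) *ᵥ vv = (A1 - M2) *ᵥ uu := by
        have hh : (M3⁻¹ * (A1 - M2)ᵀ) *ᵥ vv = uu := by rw [hu, hBmdef]
        calc ((A1 - M2) * M3⁻¹ * (A1 - M2)ᵀ) *ᵥ vv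
            = (A1 - M2) *ᵥ ((M3⁻¹ * (A1 - M2)ᵀ) *ᵥ vv) := by
              rw [Matrix.mulVec_mulVec, Matrix.mul_assoc]
          _ = (A1 - M2) *ᵥ uu := by rw [hh]
      rw [hSmdef, Matrix.sub_mulVec, hbig, vec_eq_of_sub_eq_zero r1, sub_self]
    refine ⟨vv, LinearMap.mem_ker.mpr ?_, ?_⟩
    · rw [Matrix.mulVecLin_apply, hSv]
    · rw [Matrix.mulVecLin_apply, Matrix.mulVecLin_apply, Matrix.fromRows_mulVec,
        Matrix.one_mulVec, ← hu]
      conv_rhs => rw [x_decomp x]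
      rw [hPmul]
  have hPsurj : Function.Surjective Pmat.mulVecLin := by
    intro y
    refine ⟨Sum.elim (y ∘ Sum.inl) (Sum.elim (y ∘ Sum.inr) 0), ?_⟩
    rw [Matrix.mulVecLin_apply, hPmul, Matrix.mulVec_zero, add_zero]
    funext i; cases i <;> rfl
  set Vm := Submodule.map (Matrix.fromRows (1 : Matrix (Fin 3) (Fin 3) ℝ) Bm).mulVecLin (LinearMap.ker Sm.mulVecLin)
    with hVmdef
  set Vp := Submodule.map (Matrix.fromRows (1 : Matrix (Fin 3) (Fin 3) ℝ) Bp).mulVecLin (LinearMap.ker Sp.mulVecLin)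
    with hVpdef
  have htop : Vm ⊔ Vp = ⊤ := by
    apply le_antisymm le_top
    calc (⊤ : Submodule ℝ (Fin 3 ⊕ Fin 3 → ℝ))
        = Submodule.map Pmat.mulVecLin ⊤ := by
          rw [Submodule.map_top, LinearMap.range_eq_top.mpr hPsurj]
      _ = Submodule.map Pmat.mulVecLin (LinearMap.ker (Anu lam mu ν - M).mulVecLin ⊔
            LinearMap.ker (Anu lam mu ν + M).mulVecLin) := by rw [hsup]
      _ = Submodule.map Pmat.mulVecLin (LinearMap.ker (Anu lam mu ν - M).mulVecLin) ⊔
            Submodule.map Pmat.mulVecLin (LinearMap.ker (Anu lam mu ν + M).mulVecLin) :=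
          Submodule.map_sup _ _ _
      _ ≤ Vm ⊔ Vp := sup_le_sup hsubm hsubp
  have hfr3 : Module.finrank ℝ (Fin 3 → ℝ) = 3 := by
    simp [Module.finrank_fintype_fun_eq_card]
  have hfr6 : Module.finrank ℝ (Fin 3 ⊕ Fin 3 → ℝ) = 6 := by
    simp [Module.finrank_fintype_fun_eq_card]
  have hkerp : Module.finrank ℝ (LinearMap.ker Sp.mulVecLin) ≤ 3 :=
    le_trans (Submodule.finrank_le _) hfr3.le
  have hkerm : Module.finrank ℝ (LinearMap.ker Sm.mulVecLin) ≤ 3 :=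
    le_trans (Submodule.finrank_le _) hfr3.le
  have hmp : Module.finrank ℝ Vp ≤ Module.finrank ℝ (LinearMap.ker Sp.mulVecLin) := by
    rw [hVpdef]; exact Submodule.finrank_map_le _ _
  have hmm : Module.finrank ℝ Vm ≤ Module.finrank ℝ (LinearMap.ker Sm.mulVecLin) := by
    rw [hVmdef]; exact Submodule.finrank_map_le _ _
  have hsum6 : Module.finrank ℝ ↥(Vm ⊔ Vp) = 6 := by rw [htop, finrank_top, hfr6]
  have hVsum := Submodule.finrank_sup_add_finrank_inf_eq Vm Vp
  have hkerp3 : Module.finrank ℝ (LinearMap.ker Sp.mulVecLin) = 3 := by omega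
  have hkerm3 : Module.finrank ℝ (LinearMap.ker Sm.mulVecLin) = 3 := by omega
  have hSp0 : ∀ w : Fin 3 → ℝ, Sp *ᵥ w = 0 := by
    intro w
    have htop' : LinearMap.ker Sp.mulVecLin = ⊤ :=
      Submodule.eq_top_of_finrank_eq (by rw [hkerp3, hfr3])
    have h := LinearMap.mem_ker.mp
      (htop' ▸ Submodule.mem_top : w ∈ LinearMap.ker Sp.mulVecLin)
    rwa [Matrix.mulVecLin_apply] at h
  have hSm0 : ∀ w : Fin 3 → ℝ, Sm *ᵥ w = 0 := by
    intro w
    have htop' : LinearMap.ker Sm.mulVecLin = ⊤ :=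
      Submodule.eq_top_of_finrank_eq (by rw [hkerm3, hfr3])
    have h := LinearMap.mem_ker.mp
      (htop' ▸ Submodule.mem_top : w ∈ LinearMap.ker Sm.mulVecLin)
    rwa [Matrix.mulVecLin_apply] at h
  -- final equivalences
  set pv := (Cpow lam mu (-(1/2))).mulVec ![σ 0 0, σ 1 1, σ 2 2] with hpvdef
  set qv := (fun i => mu ^ (-(1/2) : ℝ) * ![σ 0 1, σ 0 2, σ 1 2] i) with hqvdef
  have hUvec : Uvec lam mu v σ = Sum.elim v (Sum.elim pv qv) := rfl
  set uv := pv + K *ᵥ qv with huvdef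
  have hA1uv : A1 *ᵥ uv = -(σ *ᵥ ν) := by
    have e : A1 *ᵥ (K *ᵥ qv) = A2 *ᵥ qv := by rw [Matrix.mulVec_mulVec, hA1K]
    rw [huvdef, Matrix.mulVec_add, e]
    exact key_sigma lam mu h2mu hlm hmu ν σ hσ
  constructor
  · rw [hUvec, hplus, ← huvdef, sum_elim_eq_zero, sum_elim_eq_zero]
    constructor
    · rintro ⟨h1, h2, h3⟩
      have hM3uv : M3 *ᵥ uv = -((A1 + M2)ᵀ *ᵥ v) := vec_eq_neg_of_add_eq_zero h2
      have huveq : uv = -(M3⁻¹ *ᵥ ((A1 + M2)ᵀ *ᵥ v)) := by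
        rw [← hM3invmul uv, hM3uv, Matrix.mulVec_neg]
      have hthis := congrArg (A1.mulVec) huveq
      rw [hA1uv, Matrix.mulVec_neg, Matrix.mulVec_mulVec, Matrix.mulVec_mulVec] at hthis
      have hσν := (neg_injective hthis).symm
      rw [hσν, sub_self]
    · intro hR
      have hσν : (A1 * M3⁻¹ * (A1 + M2)ᵀ) *ᵥ v = σ *ᵥ ν := vec_eq_of_sub_eq_zero hR
      have huveq : uv = -(M3⁻¹ *ᵥ ((A1 + M2)ᵀ *ᵥ v)) := by
        apply vec_eq_of_sub_eq_zero
        apply hA1inj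
        rw [Matrix.mulVec_sub, hA1uv, Matrix.mulVec_neg, Matrix.mulVec_mulVec,
          Matrix.mulVec_mulVec, hσν, sub_self]
      have h2 : (A1 + M2)ᵀ *ᵥ v + M3 *ᵥ uv = 0 := by
        rw [huveq, Matrix.mulVec_neg, hM3mulinv, add_neg_cancel]
      have hM1v : M1 *ᵥ v = ((A1 + M2) * M3⁻¹ * (A1 + M2)ᵀ) *ᵥ v := by
        have h0 := hSp0 v
        rw [hSpdef, Matrix.sub_mulVec] at h0
        exact vec_eq_of_sub_eq_zero h0
      refine ⟨?_, h2, by rw [h2, Matrix.mulVec_zero]⟩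
      rw [hM1v, huveq, Matrix.mulVec_neg, Matrix.mulVec_mulVec, Matrix.mulVec_mulVec,
        Matrix.mul_assoc, ← Matrix.mul_assoc, neg_add_cancel]
  · rw [hUvec, hminus, ← huvdef, sum_elim_eq_zero, sum_elim_eq_zero]
    constructor
    · rintro ⟨h1, h2, h3⟩
      have hM3uv : (A1 - M2)ᵀ *ᵥ v = M3 *ᵥ uv := vec_eq_of_sub_eq_zero h2
      have huveq : uv = M3⁻¹ *ᵥ ((A1 - M2)ᵀ *ᵥ v) := by rw [hM3uv, hM3invmul]
      have hthis := congrArg (A1.mulVec) huveq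
      rw [hA1uv, Matrix.mulVec_mulVec, Matrix.mulVec_mulVec] at hthis
      rw [← hthis, neg_add_cancel]
    · intro hR
      have hXv : (A1 * M3⁻¹ * (A1 - M2)ᵀ) *ᵥ v = -(σ *ᵥ ν) := by
        have h0 := vec_eq_neg_of_add_eq_zero hR
        funext i
        have := congrFun h0 i
        simp only [Pi.neg_apply] at this ⊢
        linarith
      have huveq : uv = M3⁻¹ *ᵥ ((A1 - M2)ᵀ *ᵥ v) := by
        apply vec_eq_of_sub_eq_zero
        apply hA1inj
        rw [Matrix.mulVec_sub, hA1uv, Matrix.mulVec_mulVec, Matrix.mulVec_mulVec, hXv,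
          sub_self]
      have h2 : (A1 - M2)ᵀ *ᵥ v - M3 *ᵥ uv = 0 := by
        rw [huveq, hM3mulinv, sub_self]
      have hM1v : M1 *ᵥ v = ((A1 - M2) * M3⁻¹ * (A1 - M2)ᵀ) *ᵥ v := by
        have h0 := hSm0 v
        rw [hSmdef, Matrix.sub_mulVec] at h0
        exact vec_eq_of_sub_eq_zero h0
      refine ⟨?_, h2, by rw [h2, Matrix.mulVec_zero]⟩
      rw [hM1v, huveq, Matrix.mulVec_mulVec, Matrix.mulVec_mulVec, sub_self]
end
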